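/- arXiv:2110.06964 — 5 statements merged into one kernel-verified Lean document; each statement's English description precedes it below -/
import Mathlib

section
/- For any n×n complex matrix C, the hafnian of the 2n×2n symmetric block matrix [[0, C],[C^T, 0]] equals the permanent of C. -/
open Matrix Equiv

def pairEquiv (n : ℕ) : Fin (n + n) ≃ Fin n × Bool where
  toFun k := (⟨k.1 / 2, by have := k.2; omega⟩, decide (k.1 % 2 = 1))
  invFun p := ⟨2 * p.1.1 + (if p.2 then 1 else 0), by have := p.1.2; split <;> omega⟩
  left_inv k := by
    apply Fin.ext
    rcases Nat.mod_two_eq_zero_or_one k.1 with h | h <;> simp [h] <;> omega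
  right_inv p := by
    rcases p with ⟨i, b⟩
    cases b <;> simp <;> apply Fin.ext <;> simp [Nat.mul_add_mod] <;> omega

def sideEquiv (n : ℕ) : Fin n × Bool ≃ Fin (n + n) where
  toFun p := if p.2 then finSumFinEquiv (Sum.inl p.1) else finSumFinEquiv (Sum.inr p.1)
  invFun k := if h : k.1 < n then (⟨k.1, h⟩, true) else (⟨k.1 - n, by have := k.2; omega⟩, false)
  left_inv p := by
    rcases p with ⟨i, b⟩
    cases b <;> simp [finSumFinEquiv, Fin.castAdd, Fin.natAdd, i.2, Nat.not_lt.2 (Nat.le_add_right n i.1)]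
  right_inv k := by
    by_cases h : k.1 < n <;> simp [h, finSumFinEquiv, Fin.castAdd, Fin.natAdd] <;> apply Fin.ext <;> simp <;> omega

def midEquiv {n : ℕ} (f g : Equiv.Perm (Fin n)) (ε : Fin n → Bool) : Fin n × Bool ≃ Fin n × Bool where
  toFun p := (if xor p.2 (ε p.1) then f p.1 else g p.1, xor p.2 (ε p.1))
  invFun q := ((if q.2 then f.symm q.1 else g.symm q.1),
    xor q.2 (ε (if q.2 then f.symm q.1 else g.symm q.1)))
  left_inv p := by
    rcases p with ⟨i, b⟩
    cases b <;> cases hε : ε i <;> simp [hε]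
  right_inv q := by
    rcases q with ⟨j, c⟩
    cases c <;> simp

def Phi {n : ℕ} (f g : Equiv.Perm (Fin n)) (ε : Fin n → Bool) : Equiv.Perm (Fin (n + n)) :=
  (pairEquiv n).trans ((midEquiv f g ε).trans (sideEquiv n))
section
variable {n : ℕ}

lemma pairEquiv_even (i : Fin n) (h : 2 * i.1 < n + n) :
    pairEquiv n ⟨2 * i.1, h⟩ = (i, false) := by
  simp only [pairEquiv, Equiv.coe_fn_mk]
  refine Prod.ext (Fin.ext ?_) ?_
  · simp
  · simp [Nat.mul_mod_right]

lemma pairEquiv_odd (i : Fin n) (h : 2 * i.1 + 1 < n + n) :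
    pairEquiv n ⟨2 * i.1 + 1, h⟩ = (i, true) := by
  simp only [pairEquiv, Equiv.coe_fn_mk]
  refine Prod.ext (Fin.ext ?_) ?_
  · simp; omega
  · simp [Nat.mul_add_mod]

lemma Phi_even (f g : Equiv.Perm (Fin n)) (ε : Fin n → Bool) (i : Fin n) (h : 2 * i.1 < n + n) :
    Phi f g ε ⟨2 * i.1, h⟩ = sideEquiv n (if ε i then f i else g i, ε i) := by
  simp only [Phi, Equiv.trans_apply, pairEquiv_even]
  congr 1
  cases hε : ε i <;> simp [midEquiv, hε]

lemma Phi_odd (f g : Equiv.Perm (Fin n)) (ε : Fin n → Bool) (i : Fin n) (h : 2 * i.1 + 1 < n + n) :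
    Phi f g ε ⟨2 * i.1 + 1, h⟩ = sideEquiv n (if !ε i then f i else g i, !ε i) := by
  simp only [Phi, Equiv.trans_apply, pairEquiv_odd]
  congr 1
  cases hε : ε i <;> simp [midEquiv, hε]

lemma sumSymm (a : Fin (n + n)) :
    finSumFinEquiv.symm a = if h : a.1 < n then Sum.inl ⟨a.1, h⟩
      else Sum.inr ⟨a.1 - n, by have := a.2; omega⟩ := by
  rw [Equiv.symm_apply_eq]
  split <;> apply Fin.ext <;> simp [finSumFinEquiv, Fin.castAdd, Fin.natAdd] <;> omega

variable (C : Matrix (Fin n) (Fin n) ℂ)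

lemma symm_side_true (j : Fin n) : finSumFinEquiv.symm (sideEquiv n (j, true)) = Sum.inl j :=
  finSumFinEquiv.symm_apply_eq.mpr rfl

lemma symm_side_false (j : Fin n) : finSumFinEquiv.symm (sideEquiv n (j, false)) = Sum.inr j :=
  finSumFinEquiv.symm_apply_eq.mpr rfl

lemma entry_LR (j k : Fin n) :
    ((Matrix.fromBlocks 0 C Cᵀ 0).reindex finSumFinEquiv finSumFinEquiv)
      (sideEquiv n (j, true)) (sideEquiv n (k, false)) = C j k := by
  rw [Matrix.reindex_apply, Matrix.submatrix_apply, symm_side_true, symm_side_false,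
    Matrix.fromBlocks_apply₁₂]

lemma entry_RL (j k : Fin n) :
    ((Matrix.fromBlocks 0 C Cᵀ 0).reindex finSumFinEquiv finSumFinEquiv)
      (sideEquiv n (k, false)) (sideEquiv n (j, true)) = C j k := by
  rw [Matrix.reindex_apply, Matrix.submatrix_apply, symm_side_true, symm_side_false,
    Matrix.fromBlocks_apply₂₁, Matrix.transpose_apply]

lemma entry_zero (a b : Fin (n + n)) (h : (a.1 < n ↔ b.1 < n)) :
    ((Matrix.fromBlocks 0 C Cᵀ 0).reindex finSumFinEquiv finSumFinEquiv) a b = 0 := by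
  rw [Matrix.reindex_apply, Matrix.submatrix_apply, sumSymm, sumSymm]
  by_cases ha : a.1 < n
  · rw [dif_pos ha, dif_pos (h.mp ha)]; simp
  · rw [dif_neg ha, dif_neg (fun hb => ha (h.mpr hb))]; simp

end

/-- The permanent of a square matrix. -/
noncomputable def perm {n : ℕ} (C : Matrix (Fin n) (Fin n) ℂ) : ℂ :=
  ∑ σ : Equiv.Perm (Fin n), ∏ i, C i (σ i)

/-- The hafnian of a `2n × 2n` matrix. -/
noncomputable def hafnian {n : ℕ} (A : Matrix (Fin (n + n)) (Fin (n + n)) ℂ) : ℂ :=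
  (1 / ((n.factorial : ℂ) * 2 ^ n)) *
    ∑ σ : Equiv.Perm (Fin (n + n)), ∏ i : Fin n,
      A (σ ⟨2 * i.1, by have := i.2; omega⟩) (σ ⟨2 * i.1 + 1, by have := i.2; omega⟩)

theorem hafnian_block_eq_perm {n : ℕ} (C : Matrix (Fin n) (Fin n) ℂ) :
    hafnian ((Matrix.fromBlocks 0 C Cᵀ 0).reindex finSumFinEquiv finSumFinEquiv) = perm C := by
  classical
  unfold hafnian perm
  set A := (Matrix.fromBlocks 0 C Cᵀ 0).reindex finSumFinEquiv finSumFinEquiv with hA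
  set t : Equiv.Perm (Fin (n + n)) → ℂ := fun σ => ∏ i : Fin n,
      A (σ ⟨2 * i.1, by have := i.2; omega⟩) (σ ⟨2 * i.1 + 1, by have := i.2; omega⟩) with ht
  -- term value on the image of Phi
  have hterm : ∀ (f g : Equiv.Perm (Fin n)) (ε : Fin n → Bool),
      t (Phi f g ε) = ∏ i, C (f i) (g i) := by
    intro f g ε
    rw [ht]
    refine Finset.prod_congr rfl fun i _ => ?_
    rw [Phi_even, Phi_odd]
    cases hε : ε i <;> simp only [Bool.not_false, Bool.not_true, if_true, if_false,
      Bool.false_eq_true, Bool.true_eq_false] <;> [exact entry_RL C _ _; exact entry_LR C _ _]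
  -- injectivity of Phi
  have hinj : ∀ (f g : Equiv.Perm (Fin n)) (ε : Fin n → Bool) f' g' ε',
      Phi f g ε = Phi f' g' ε' → f = f' ∧ g = g' ∧ ε = ε' := by
    intro f g ε f' g' ε' h
    have he : ∀ (i : Fin n),
        (if ε i then f i else g i, ε i) = (if ε' i then f' i else g' i, ε' i) ∧
        (if !ε i then f i else g i, !ε i) = (if !ε' i then f' i else g' i, !ε' i) := by
      intro i
      have h1 : Phi f g ε ⟨2 * i.1, by have := i.2; omega⟩
          = Phi f' g' ε' ⟨2 * i.1, by have := i.2; omega⟩ := by rw [h]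
      have h2 : Phi f g ε ⟨2 * i.1 + 1, by have := i.2; omega⟩
          = Phi f' g' ε' ⟨2 * i.1 + 1, by have := i.2; omega⟩ := by rw [h]
      rw [Phi_even, Phi_even] at h1
      rw [Phi_odd, Phi_odd] at h2
      exact ⟨(sideEquiv n).injective h1, (sideEquiv n).injective h2⟩
    have hε : ε = ε' := by
      funext i
      have := ((he i).1)
      exact (Prod.ext_iff.mp this).2
    subst hε
    refine ⟨Equiv.ext fun i => ?_, Equiv.ext fun i => ?_, rfl⟩ <;>
      · have h1 := (Prod.ext_iff.mp (he i).1).1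
        have h2 := (Prod.ext_iff.mp (he i).2).1
        cases hb : ε i <;> simp [hb] at h1 h2 <;> assumption
  -- vanishing off the image of Phi
  have hzero : ∀ σ : Equiv.Perm (Fin (n + n)),
      σ ∉ Finset.image (fun x : Equiv.Perm (Fin n) × Equiv.Perm (Fin n) × (Fin n → Bool) =>
        Phi x.1 x.2.1 x.2.2) Finset.univ → t σ = 0 := by
    intro σ hσ
    by_contra h0
    apply hσ
    -- every factor is nonzero, so pairs straddle the two blocks
    have hs : ∀ i : Fin n,
        ((σ ⟨2 * i.1, by have := i.2; omega⟩).1 < n ↔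
          ¬ (σ ⟨2 * i.1 + 1, by have := i.2; omega⟩).1 < n) := by
      intro i
      have hfac : A (σ ⟨2 * i.1, by have := i.2; omega⟩)
          (σ ⟨2 * i.1 + 1, by have := i.2; omega⟩) ≠ 0 := by
        intro hz
        apply h0
        rw [ht]
        exact Finset.prod_eq_zero (Finset.mem_univ i) hz
      by_contra hc
      exact hfac (entry_zero C _ _ (by tauto))
    -- reconstruct the triple
    set μ : Fin n × Bool ≃ Fin n × Bool :=
      ((pairEquiv n).symm.trans (σ.trans (sideEquiv n).symm)) with hμ
    set ε0 : Fin n → Bool := fun i => (μ (i, false)).2 with hε0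
    have hpe : ∀ i : Fin n, (pairEquiv n).symm (i, false)
        = (⟨2 * i.1, by have := i.2; omega⟩ : Fin (n + n)) := by
      intro i; apply Fin.ext; simp [pairEquiv]
    have hpo : ∀ i : Fin n, (pairEquiv n).symm (i, true)
        = (⟨2 * i.1 + 1, by have := i.2; omega⟩ : Fin (n + n)) := by
      intro i; apply Fin.ext; simp [pairEquiv]
    have hsideSymm : ∀ k : Fin (n + n), ((sideEquiv n).symm k).2 = decide (k.1 < n) := by
      intro k
      by_cases hk : k.1 < n <;> simp [sideEquiv, hk]
    have hside : ∀ (i : Fin n) (b : Bool), (μ (i, b)).2 = xor b (ε0 i) := by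
      intro i b
      cases b
      · simp [hε0]
      · rw [hε0]
        simp only [hμ, Equiv.trans_apply, hpe, hpo, hsideSymm]
        have := hs i
        by_cases hc : (σ ⟨2 * i.1, by have := i.2; omega⟩).1 < n
        · simp [hc, (hs i).mp hc]
        · have hpo' : (σ ⟨2 * i.1 + 1, by have := i.2; omega⟩).1 < n := by
            have := hs i; tauto
          simp [hc, hpo']
    set f0 : Fin n → Fin n := fun i => (μ (i, !ε0 i)).1 with hf0
    set g0 : Fin n → Fin n := fun i => (μ (i, ε0 i)).1 with hg0
    have hf0i : Function.Injective f0 := by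
      intro i j hij
      have : μ (i, !ε0 i) = μ (j, !ε0 j) := by
        refine Prod.ext hij ?_
        rw [hside, hside]
        cases hεi : ε0 i <;> cases hεj : ε0 j <;> simp
      have := μ.injective this
      exact (Prod.ext_iff.mp this).1
    have hg0i : Function.Injective g0 := by
      intro i j hij
      have : μ (i, ε0 i) = μ (j, ε0 j) := by
        refine Prod.ext hij ?_
        rw [hside, hside]
        cases hεi : ε0 i <;> cases hεj : ε0 j <;> simp
      have := μ.injective this
      exact (Prod.ext_iff.mp this).1
    set f : Equiv.Perm (Fin n) := Equiv.ofBijective f0 (Finite.injective_iff_bijective.mp hf0i)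
      with hf
    set g : Equiv.Perm (Fin n) := Equiv.ofBijective g0 (Finite.injective_iff_bijective.mp hg0i)
      with hg
    have hmid : midEquiv f g ε0 = μ := by
      apply Equiv.ext
      rintro ⟨i, b⟩
      have h2 := hside i b
      refine Prod.ext ?_ (by simp [midEquiv, h2.symm])
      simp only [midEquiv, Equiv.coe_fn_mk]
      cases hb : b <;> cases hε : ε0 i <;>
        simp only [Bool.xor_false, Bool.xor_true, Bool.not_false, Bool.not_true, if_true, if_false,
          Bool.false_eq_true, Bool.true_eq_false] <;>
        first
          | (show f0 i = _; rw [hf0]; simp [hε])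
          | (show g0 i = _; rw [hg0]; simp [hε])
    refine Finset.mem_image.mpr ⟨(f, g, ε0), Finset.mem_univ _, ?_⟩
    show Phi f g ε0 = σ
    rw [Phi, hmid, hμ]
    apply Equiv.ext
    intro k
    simp
  -- put everything together
  have hsum : ∑ σ : Equiv.Perm (Fin (n + n)), t σ
      = (n.factorial : ℂ) * 2 ^ n * ∑ τ : Equiv.Perm (Fin n), ∏ i, C i (τ i) := by
    rw [← Finset.sum_subset (Finset.subset_univ (Finset.image
      (fun x : Equiv.Perm (Fin n) × Equiv.Perm (Fin n) × (Fin n → Bool) =>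
        Phi x.1 x.2.1 x.2.2) Finset.univ)) (fun σ _ hσ => hzero σ hσ)]
    rw [Finset.sum_image (fun x _ y _ hxy => by
      obtain ⟨h1, h2, h3⟩ := hinj x.1 x.2.1 x.2.2 y.1 y.2.1 y.2.2 hxy
      exact Prod.ext h1 (Prod.ext h2 h3))]
    have : ∀ x : Equiv.Perm (Fin n) × Equiv.Perm (Fin n) × (Fin n → Bool),
        t (Phi x.1 x.2.1 x.2.2) = ∏ i, C (x.1 i) (x.2.1 i) := fun x => hterm x.1 x.2.1 x.2.2
    rw [Finset.sum_congr rfl (fun x _ => this x)]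
    rw [Fintype.sum_prod_type]
    have hgsum : ∀ f : Equiv.Perm (Fin n),
        ∑ y : Equiv.Perm (Fin n) × (Fin n → Bool), (∏ i, C (f i) (y.1 i))
          = (2 : ℂ) ^ n * ∑ τ : Equiv.Perm (Fin n), ∏ i, C i (τ i) := by
      intro f
      rw [Fintype.sum_prod_type]
      have h1 : ∀ gg : Equiv.Perm (Fin n),
          (∏ i, C (f i) (gg i)) = ∏ j, C j (gg (f.symm j)) := by
        intro gg
        rw [← Equiv.prod_comp f (fun j => C j (gg (f.symm j)))]
        exact Finset.prod_congr rfl (fun i _ => by rw [Equiv.symm_apply_apply])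
      calc ∑ gg : Equiv.Perm (Fin n), ∑ _ε : Fin n → Bool, ∏ i, C (f i) (gg i)
          = ∑ gg : Equiv.Perm (Fin n), (2 : ℂ) ^ n * ∏ j, C j (gg (f.symm j)) := by
            refine Finset.sum_congr rfl fun gg _ => ?_
            rw [Finset.sum_const, h1 gg, nsmul_eq_mul]
            norm_num
        _ = (2 : ℂ) ^ n * ∑ gg : Equiv.Perm (Fin n), ∏ j, C j (gg (f.symm j)) := by
            rw [Finset.mul_sum]
        _ = (2 : ℂ) ^ n * ∑ τ : Equiv.Perm (Fin n), ∏ i, C i (τ i) := by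
            congr 1
            exact Fintype.sum_equiv (Equiv.mulRight f⁻¹) _ _ (fun gg => by
              refine Finset.prod_congr rfl fun j _ => ?_
              rfl)
    rw [Finset.sum_congr rfl (fun f _ => hgsum f), Finset.sum_const]
    rw [nsmul_eq_mul]
    rw [Finset.card_univ, Fintype.card_perm, Fintype.card_fin]
    ring
  rw [hsum]
  have h1 : (n.factorial : ℂ) ≠ 0 := Nat.cast_ne_zero.mpr (Nat.factorial_ne_zero n)
  have h2 : (2 : ℂ) ^ n ≠ 0 := pow_ne_zero n two_ne_zero
  field_simp
end

section
/- Let A be a c×c random matrix whose entries are i.i.d. standard complex Gaussians (mean 0, E[|a|^2]=1). Let S, T ∈ ℕ^c be repetition vectors with n = ∑ s_i = ∑ t_j, and let A_{S,T} be the n×n matrix obtained by repeating row i of A exactly s_i times and column j exactly t_j times. Then E[|Per(A_{S,T})|^2] = n! ∏_i s_i! ∏_j t_j!. -/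
open MeasureTheory ProbabilityTheory

/-- A random `c × c` matrix whose entries are i.i.d. standard complex Gaussians, built from
two independent real Gaussians of variance `1/2` (real and imaginary part) per entry. -/
noncomputable def gaussianMatrix (c : ℕ) (ω : (Fin c × Fin c) × Bool → ℝ) :
    Matrix (Fin c) (Fin c) ℂ :=
  fun i j => Complex.mk (ω ((i, j), true)) (ω ((i, j), false))

/-- The permanent of the matrix obtained from `A` by repeating row `i` exactly `S i` times and
column `j` exactly `T j` times, realizing the row and column blocks as sigma types. -/
noncomputable def permRep {c : ℕ} (A : Matrix (Fin c) (Fin c) ℂ) (S T : Fin c → ℕ) : ℂ :=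
  ∑ σ : (Σ i : Fin c, Fin (S i)) ≃ (Σ j : Fin c, Fin (T j)),
    ∏ k : (Σ i : Fin c, Fin (S i)), A k.1 (σ k).1


section Counting

lemma nat_card_equiv_eq_ite (X Y : Type*) [Fintype X] [Fintype Y] :
    Nat.card (X ≃ Y) = if Nat.card X = Nat.card Y then (Nat.card X).factorial else 0 := by
  classical
  simp only [Nat.card_eq_fintype_card]
  by_cases h : Fintype.card X = Fintype.card Y
  · rw [if_pos h, Fintype.card_equiv (Fintype.equivOfCardEq h)]
  · rw [if_neg h, Fintype.card_eq_zero_iff]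
    exact ⟨fun e => h (Fintype.card_congr e)⟩

/-- The equivalence between equivalences intertwining fiber maps and families of
fiber equivalences. -/
def fiberEquivPi {X Y C : Type*} (u : X → C) (v : Y → C) :
    {e : X ≃ Y // ∀ x, v (e x) = u x} ≃ (∀ j : C, {x // u x = j} ≃ {y // v y = j}) where
  toFun e j := Equiv.subtypeEquiv e.1 (fun x => by rw [e.2 x])
  invFun F := ⟨(Equiv.sigmaFiberEquiv u).symm.trans
      ((Equiv.sigmaCongrRight F).trans (Equiv.sigmaFiberEquiv v)),
    fun x => (F (u x) ⟨x, rfl⟩).2⟩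
  left_inv e := Subtype.ext (Equiv.ext fun x => rfl)
  right_inv F := by
    funext j
    ext w
    obtain ⟨x, hx⟩ := w
    subst hx
    rfl

/-- Counting equivalences that intertwine two maps to a finite index type. -/
lemma nat_card_intertwining {X Y C : Type*} [Fintype X] [Fintype Y] [Fintype C]
    (u : X → C) (v : Y → C) :
    Nat.card {e : X ≃ Y // ∀ x, v (e x) = u x} =
      ∏ j : C, (if Nat.card {x // u x = j} = Nat.card {y // v y = j}
        then (Nat.card {x // u x = j}).factorial else 0) := by
  classical
  rw [Nat.card_congr (fiberEquivPi u v), Nat.card_pi]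
  exact Finset.prod_congr rfl fun j _ => nat_card_equiv_eq_ite _ _

lemma nat_card_subtype_eq_sum {A : Type*} [Fintype A] (P : A → Prop) [DecidablePred P] :
    Nat.card {a // P a} = ∑ a : A, if P a then 1 else 0 := by
  rw [Nat.card_eq_fintype_card, Fintype.card_subtype, Finset.card_filter]

lemma card_swap {A B : Type*} [Fintype A] [Fintype B] (R : A → B → Prop) :
    ∑ a : A, Nat.card {b // R a b} = ∑ b : B, Nat.card {a // R a b} := by
  classical
  simp_rw [nat_card_subtype_eq_sum]
  rw [Finset.sum_comm]

lemma prod_comp_count {K I M : Type*} [Fintype K] [Fintype I] [CommMonoid M]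
    (φ : K → I) (w : I → M) :
    ∏ k, w (φ k) = ∏ p, w p ^ (Nat.card {k // φ k = p}) := by
  classical
  rw [← Finset.prod_fiberwise_of_maps_to (fun k _ => Finset.mem_univ (φ k)) (fun k => w (φ k))]
  refine Finset.prod_congr rfl fun p _ => ?_
  rw [Finset.prod_congr rfl (fun k hk => by rw [(Finset.mem_filter.mp hk).2]), Finset.prod_const]
  congr 1
  rw [Nat.card_eq_fintype_card, Fintype.card_subtype]

end Counting

section Mult

variable {c : ℕ} {S T : Fin c → ℕ}

/-- Number of elements of the `i`-th row block sent by `σ` into the `j`-th column block. -/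
noncomputable def mult (S T : Fin c → ℕ)
    (σ : (Σ i : Fin c, Fin (S i)) ≃ (Σ j : Fin c, Fin (T j)))
    (p : Fin c × Fin c) : ℕ :=
  Nat.card {x : Fin (S p.1) // (σ ⟨p.1, x⟩).1 = p.2}

lemma card_sigma_fiber (σ : (Σ i : Fin c, Fin (S i)) ≃ (Σ j : Fin c, Fin (T j)))
    (p : Fin c × Fin c) :
    Nat.card {k : Σ i : Fin c, Fin (S i) // (k.1, (σ k).1) = p} = mult S T σ p := by
  refine Nat.card_congr (Equiv.symm (Equiv.ofBijective
    (fun x => ⟨⟨p.1, x.1⟩, by rw [x.2]⟩) ⟨fun a b hab => ?_, fun k => ?_⟩))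
  · apply Subtype.ext
    have := congrArg Subtype.val hab
    simpa using this
  · obtain ⟨⟨i, x⟩, hk⟩ := k
    have h1 : i = p.1 := (Prod.ext_iff.mp hk).1
    subst h1
    exact ⟨⟨x, (Prod.ext_iff.mp hk).2⟩, Subtype.ext rfl⟩

/-- Grouping a product over the sigma type according to row/column blocks. -/
lemma prod_sigma_eq_prod_pow {M : Type*} [CommMonoid M]
    (σ : (Σ i : Fin c, Fin (S i)) ≃ (Σ j : Fin c, Fin (T j))) (w : Fin c × Fin c → M) :
    ∏ k : Σ i : Fin c, Fin (S i), w (k.1, (σ k).1) = ∏ p : Fin c × Fin c, w p ^ mult S T σ p := by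
  rw [prod_comp_count (fun k : Σ i : Fin c, Fin (S i) => (k.1, (σ k).1)) w]
  exact Finset.prod_congr rfl fun p _ => by rw [card_sigma_fiber]

lemma card_fst_fiber (T : Fin c → ℕ) (j : Fin c) :
    Nat.card {y : Σ j' : Fin c, Fin (T j') // y.1 = j} = T j := by
  have h : Nat.card (Fin (T j)) = T j := by simp
  rw [← h]
  refine Nat.card_congr (Equiv.symm (Equiv.ofBijective
    (fun x => ⟨⟨j, x⟩, rfl⟩) ⟨fun a b hab => ?_, fun y => ?_⟩))
  · have := congrArg Subtype.val hab
    simpa [Sigma.mk.inj_iff] using this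
  · obtain ⟨⟨j', x⟩, hy⟩ := y
    cases hy
    exact ⟨x, rfl⟩

end Mult

section StepD

variable {c n : ℕ} (S T : Fin c → ℕ)

lemma stepD (hS : ∑ i, S i = n) (hT : ∑ j, T j = n) :
    ∑ σ : (Σ i : Fin c, Fin (S i)) ≃ (Σ j : Fin c, Fin (T j)),
      ∑ τ : (Σ i : Fin c, Fin (S i)) ≃ (Σ j : Fin c, Fin (T j)),
        ∏ p : Fin c × Fin c,
          (if mult S T σ p = mult S T τ p then (mult S T σ p).factorial else 0) =
      n.factorial * (∏ i, (S i).factorial) * ∏ j, (T j).factorial := by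
  classical
  have D1 : ∀ (σ τ : (Σ i : Fin c, Fin (S i)) ≃ (Σ j : Fin c, Fin (T j))),
      ∏ p : Fin c × Fin c,
          (if mult S T σ p = mult S T τ p then (mult S T σ p).factorial else 0) =
      Nat.card {α : ∀ i : Fin c, Equiv.Perm (Fin (S i)) //
        ∀ (i : Fin c) (x : Fin (S i)), (σ ⟨i, α i x⟩).1 = (τ ⟨i, x⟩).1} := by
    intro σ τ
    rw [Nat.card_congr (Equiv.subtypePiEquivPi
      (p := fun (i : Fin c) (e : Equiv.Perm (Fin (S i))) =>
        ∀ x : Fin (S i), (σ ⟨i, e x⟩).1 = (τ ⟨i, x⟩).1)), Nat.card_pi,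
      Fintype.prod_prod_type]
    refine Finset.prod_congr rfl fun i _ => ?_
    rw [nat_card_intertwining (fun x : Fin (S i) => (τ ⟨i, x⟩).1)
      (fun y : Fin (S i) => (σ ⟨i, y⟩).1)]
    refine Finset.prod_congr rfl fun j _ => ?_
    show _ = (if mult S T τ (i, j) = mult S T σ (i, j) then (mult S T τ (i, j)).factorial else 0)
    by_cases h : mult S T σ (i, j) = mult S T τ (i, j)
    · rw [if_pos h, if_pos h.symm, h]
    · rw [if_neg h, if_neg (fun hh => h hh.symm)]
  calc
    ∑ σ : (Σ i : Fin c, Fin (S i)) ≃ (Σ j : Fin c, Fin (T j)),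
      ∑ τ : (Σ i : Fin c, Fin (S i)) ≃ (Σ j : Fin c, Fin (T j)),
        ∏ p : Fin c × Fin c,
          (if mult S T σ p = mult S T τ p then (mult S T σ p).factorial else 0)
    _ = ∑ σ : (Σ i : Fin c, Fin (S i)) ≃ (Σ j : Fin c, Fin (T j)),
        ∑ α : ∀ i : Fin c, Equiv.Perm (Fin (S i)),
          Nat.card {τ : (Σ i : Fin c, Fin (S i)) ≃ (Σ j : Fin c, Fin (T j)) //
            ∀ (i : Fin c) (x : Fin (S i)), (σ ⟨i, α i x⟩).1 = (τ ⟨i, x⟩).1} := by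
      refine Finset.sum_congr rfl fun σ _ => ?_
      rw [← card_swap (fun (τ : (Σ i : Fin c, Fin (S i)) ≃ (Σ j : Fin c, Fin (T j)))
        (α : ∀ i : Fin c, Equiv.Perm (Fin (S i))) =>
          ∀ (i : Fin c) (x : Fin (S i)), (σ ⟨i, α i x⟩).1 = (τ ⟨i, x⟩).1)]
      exact Finset.sum_congr rfl fun τ _ => D1 σ τ
    _ = ∑ σ : (Σ i : Fin c, Fin (S i)) ≃ (Σ j : Fin c, Fin (T j)),
        ∑ α : ∀ i : Fin c, Equiv.Perm (Fin (S i)), ∏ j, (T j).factorial := by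
      refine Finset.sum_congr rfl fun σ _ => Finset.sum_congr rfl fun α _ => ?_
      have h1 : Nat.card {τ : (Σ i : Fin c, Fin (S i)) ≃ (Σ j : Fin c, Fin (T j)) //
          ∀ (i : Fin c) (x : Fin (S i)), (σ ⟨i, α i x⟩).1 = (τ ⟨i, x⟩).1} =
          Nat.card {τ : (Σ i : Fin c, Fin (S i)) ≃ (Σ j : Fin c, Fin (T j)) //
          ∀ k : Σ i : Fin c, Fin (S i), (τ k).1 = (σ ⟨k.1, α k.1 k.2⟩).1} := by
        refine Nat.card_congr (Equiv.subtypeEquivRight fun τ => ?_)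
        constructor
        · intro h k
          exact (h k.1 k.2).symm
        · intro h i x
          exact (h ⟨i, x⟩).symm
      rw [h1, nat_card_intertwining
        (fun k : Σ i : Fin c, Fin (S i) => (σ ⟨k.1, α k.1 k.2⟩).1)
        (fun y : Σ j : Fin c, Fin (T j) => y.1)]
      refine Finset.prod_congr rfl fun j _ => ?_
      have hu : Nat.card {k : Σ i : Fin c, Fin (S i) // (σ ⟨k.1, α k.1 k.2⟩).1 = j} = T j := by
        rw [← card_fst_fiber T j]
        exact Nat.card_congr (Equiv.subtypeEquiv ((Equiv.sigmaCongrRight α).trans σ)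
          (fun k => Iff.rfl))
      rw [hu, card_fst_fiber, if_pos rfl]
    _ = n.factorial * (∏ i, (S i).factorial) * ∏ j, (T j).factorial := by
      rw [Finset.sum_const, Finset.sum_const, smul_eq_mul, smul_eq_mul, ← mul_assoc]
      congr 2
      · rw [Finset.card_univ, Fintype.card_equiv (Fintype.equivOfCardEq (by simp [hS, hT]))]
        simp [hS]
      · rw [Finset.card_univ, Fintype.card_pi]
        exact Finset.prod_congr rfl fun i _ => by simp [Fintype.card_perm]

end StepD

open Real
open scoped ENNReal NNReal

noncomputable section

namespace GaussPerm

def γh : Measure ℝ := gaussianReal 0 (1/2)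
def μ2 : Measure (ℝ × ℝ) := γh.prod γh

instance : IsProbabilityMeasure γh := by unfold γh; infer_instance
instance : IsProbabilityMeasure μ2 := by unfold μ2; infer_instance

def pdf2 (p : ℝ × ℝ) : ℝ := gaussianPDFReal 0 (1/2) p.1 * gaussianPDFReal 0 (1/2) p.2

lemma pdf_eq : gaussianPDFReal 0 (1/2) = fun x => (Real.sqrt π)⁻¹ * Real.exp (-x^2) := by
  funext x
  rw [gaussianPDFReal]
  push_cast
  rw [show (2:ℝ)*π*(1/2) = π by ring]
  norm_num

lemma pdf_nonneg (x : ℝ) : 0 ≤ gaussianPDFReal 0 (1/2) x := gaussianPDFReal_nonneg _ _ _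

lemma pdf2_nonneg (p : ℝ × ℝ) : 0 ≤ pdf2 p := mul_nonneg (pdf_nonneg _) (pdf_nonneg _)

lemma pdf2_measurable_nnreal :
    Measurable (fun p : ℝ × ℝ => (pdf2 p).toNNReal) :=
  (((measurable_gaussianPDFReal 0 (1/2)).comp measurable_fst).mul
    ((measurable_gaussianPDFReal 0 (1/2)).comp measurable_snd)).real_toNNReal

lemma μ2_eq : μ2 = (volume : Measure (ℝ × ℝ)).withDensity
    (fun p => ((pdf2 p).toNNReal : ℝ≥0∞)) := by
  have hv : (1/2 : ℝ≥0) ≠ 0 := by norm_num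
  have hpdf : ∀ p : ℝ × ℝ, ((pdf2 p).toNNReal : ℝ≥0∞) =
      gaussianPDF 0 (1/2) p.1 * gaussianPDF 0 (1/2) p.2 := by
    intro p
    rw [show ((pdf2 p).toNNReal : ℝ≥0∞) = ENNReal.ofReal (pdf2 p) from rfl, pdf2,
      ENNReal.ofReal_mul (pdf_nonneg _)]
    rfl
  haveI h1 : IsProbabilityMeasure ((volume : Measure ℝ).withDensity (gaussianPDF 0 (1/2))) := by
    rw [← gaussianReal_of_var_ne_zero 0 hv]; infer_instance
  unfold μ2 γh
  rw [gaussianReal_of_var_ne_zero 0 hv]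
  refine Measure.prod_eq (fun s t hs ht => ?_)
  rw [withDensity_apply _ (hs.prod ht)]
  rw [Measure.volume_eq_prod, ← Measure.prod_restrict]
  rw [lintegral_congr hpdf]
  rw [lintegral_prod_mul ((measurable_gaussianPDF 0 (1/2)).aemeasurable)
    ((measurable_gaussianPDF 0 (1/2)).aemeasurable)]
  rw [← withDensity_apply _ hs, ← withDensity_apply _ ht]

lemma integral_μ2_eq (f : ℝ × ℝ → ℂ) :
    ∫ p, f p ∂μ2 = ∫ p : ℝ × ℝ, pdf2 p • f p := by
  rw [μ2_eq, integral_withDensity_eq_integral_smul pdf2_measurable_nnreal]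
  congr 1
  funext p
  rw [NNReal.smul_def, Real.coe_toNNReal _ (pdf2_nonneg p)]

lemma integrable_μ2_iff (f : ℝ × ℝ → ℂ) :
    Integrable f μ2 ↔ Integrable (fun p : ℝ × ℝ => pdf2 p • f p) volume := by
  rw [μ2_eq, integrable_withDensity_iff_integrable_smul pdf2_measurable_nnreal]
  have hfun : ∀ p : ℝ × ℝ, ((pdf2 p).toNNReal : ℝ≥0) • f p = pdf2 p • f p := fun p => by
    rw [NNReal.smul_def, Real.coe_toNNReal _ (pdf2_nonneg p)]
  constructor <;> intro h <;> refine h.congr (Filter.Eventually.of_forall fun p => ?_)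
  · exact hfun p
  · exact (hfun p).symm

/-- The entry function. -/
def ent (p : ℝ × ℝ) : ℂ := Complex.mk p.1 p.2

lemma ent_eq (p : ℝ × ℝ) : ent p = (p.1 : ℂ) + (p.2 : ℂ) * Complex.I :=
  Complex.mk_eq_add_mul_I _ _

lemma continuous_ent : Continuous ent := by
  have : ent = fun p : ℝ × ℝ => (p.1 : ℂ) + (p.2 : ℂ) * Complex.I := funext ent_eq
  rw [this]
  fun_prop

lemma norm_ent_le (p : ℝ × ℝ) : ‖ent p‖ ≤ 1 + p.1^2 + p.2^2 := by
  have h2 : ‖ent p‖^2 = p.1^2 + p.2^2 := by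
    rw [Complex.sq_norm]
    show Complex.normSq (ent p) = _
    rw [ent, Complex.normSq_mk]
    ring
  nlinarith [norm_nonneg (ent p)]

lemma theta_int (k : ℤ) (hk : k ≠ 0) :
    ∫ θ in Set.Ioo (-π) π, Complex.exp ((k:ℂ) * θ * Complex.I) = 0 := by
  have hle : -π ≤ π := by linarith [pi_pos]
  rw [← integral_Ioc_eq_integral_Ioo, ← intervalIntegral.integral_of_le hle]
  have h0 : ((k:ℂ) * Complex.I) ≠ 0 :=
    mul_ne_zero (Int.cast_ne_zero.mpr hk) Complex.I_ne_zero
  rw [show (fun θ : ℝ => Complex.exp ((k:ℂ) * θ * Complex.I)) =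
      (fun θ : ℝ => Complex.exp (((k:ℂ) * Complex.I) * θ)) from funext fun θ => by ring_nf]
  rw [integral_exp_mul_complex h0]
  rw [show ((k:ℂ) * Complex.I) * (π:ℂ) = (k:ℂ) * ((π:ℂ) * Complex.I) by ring]
  rw [show ((k:ℂ) * Complex.I) * ((-π : ℝ):ℂ) = (k:ℂ) * (-((π:ℂ) * Complex.I)) by push_cast; ring]
  rw [Complex.exp_int_mul, Complex.exp_int_mul, Complex.exp_neg, Complex.exp_pi_mul_I]
  norm_num

lemma r_int (a : ℕ) :
    ∫ r in Set.Ioi (0:ℝ), r ^ (2*a+1) * Real.exp (-r^2) = (a.factorial : ℝ)/2 := by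
  have h2 : (2:ℝ) ≠ 0 := two_ne_zero
  have key := integral_comp_rpow_Ioi (fun t => Real.exp (-t) * t^(a:ℝ)) h2
  have hcong : Set.EqOn
      (fun x : ℝ => (|(2:ℝ)| * x ^ ((2:ℝ)-1)) • (Real.exp (-(x^(2:ℝ))) * (x^(2:ℝ))^(a:ℝ)))
      (fun x : ℝ => 2 * (x ^ (2*a+1) * Real.exp (-x^2))) (Set.Ioi 0) := by
    intro x hx
    have hx0 : (0:ℝ) < x := hx
    simp only [smul_eq_mul]
    rw [abs_two, show ((2:ℝ)-1) = (1:ℝ) by norm_num, Real.rpow_one]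
    rw [show (x:ℝ)^(2:ℝ) = x^(2:ℕ) from by rw [← Real.rpow_natCast x 2]; norm_num]
    rw [Real.rpow_natCast (x^(2:ℕ)) a]
    ring
  rw [setIntegral_congr_fun measurableSet_Ioi hcong] at key
  have hG : ∫ t in Set.Ioi (0:ℝ), Real.exp (-t) * t^(a:ℝ) = (a.factorial : ℝ) := by
    have h1 := Real.Gamma_eq_integral (s := (a:ℝ)+1) (by positivity)
    rw [show ((a:ℝ)+1-1) = (a:ℝ) by ring] at h1
    rw [← h1, Real.Gamma_nat_eq_factorial]
  rw [hG, integral_const_mul] at key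
  linarith


lemma conj_ent_polar (r θ : ℝ) :
    ent (polarCoord.symm (r, θ)) = (r:ℂ) * Complex.exp ((θ:ℂ) * Complex.I) := by
  rw [polarCoord_symm_apply]
  simp only [ent_eq, Complex.exp_mul_I]
  push_cast [Complex.ofReal_cos, Complex.ofReal_sin]
  ring

lemma pow_ent_polar (a b : ℕ) (r θ : ℝ) :
    ent (polarCoord.symm (r, θ)) ^ a * (starRingEnd ℂ) (ent (polarCoord.symm (r, θ))) ^ b =
      (r:ℂ) ^ (a+b) * Complex.exp (((a:ℂ) - (b:ℂ)) * θ * Complex.I) := by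
  rw [conj_ent_polar]
  rw [map_mul, Complex.conj_ofReal, ← Complex.exp_conj]
  rw [show (starRingEnd ℂ) ((θ:ℂ) * Complex.I) = (θ:ℂ) * (-Complex.I) by
    rw [map_mul, Complex.conj_ofReal, Complex.conj_I]]
  rw [mul_pow, mul_pow, ← Complex.exp_nat_mul, ← Complex.exp_nat_mul]
  rw [show ((r:ℂ))^a * Complex.exp (↑a * ((θ:ℂ) * Complex.I)) *
      (((r:ℂ))^b * Complex.exp (↑b * ((θ:ℂ) * (-Complex.I)))) =
      ((r:ℂ))^a * ((r:ℂ))^b * (Complex.exp (↑a * ((θ:ℂ) * Complex.I)) *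
        Complex.exp (↑b * ((θ:ℂ) * (-Complex.I)))) by ring]
  rw [← Complex.exp_add, ← pow_add]
  congr 2
  ring

lemma pdf2_polar (r θ : ℝ) :
    pdf2 (polarCoord.symm (r, θ)) = π⁻¹ * Real.exp (-r^2) := by
  rw [polarCoord_symm_apply, pdf2, pdf_eq]
  simp only []
  rw [show ((√π)⁻¹ * Real.exp (-(r*Real.cos θ)^2)) * ((√π)⁻¹ * Real.exp (-(r*Real.sin θ)^2)) =
      (√π*√π)⁻¹ * (Real.exp (-(r*Real.cos θ)^2) * Real.exp (-(r*Real.sin θ)^2)) by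
    rw [mul_inv]; ring]
  rw [Real.mul_self_sqrt pi_pos.le, ← Real.exp_add,
    show -(r*Real.cos θ)^2 + -(r*Real.sin θ)^2 = -r^2 by nlinarith [sin_sq_add_cos_sq θ]]

lemma mom (a b : ℕ) :
    ∫ p, ent p ^ a * (starRingEnd ℂ) (ent p) ^ b ∂μ2 =
      if a = b then (a.factorial : ℂ) else 0 := by
  have hF : ∀ p : ℝ × ℝ,
      p.1 • ((fun q : ℝ × ℝ => pdf2 q • (ent q ^ a * (starRingEnd ℂ) (ent q) ^ b))
        (polarCoord.symm p)) =
      ((p.1 ^ (a+b+1) * (π⁻¹ * Real.exp (-p.1^2)) : ℝ) : ℂ) *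
        Complex.exp (((a:ℂ) - (b:ℂ)) * p.2 * Complex.I) := by
    rintro ⟨r, θ⟩
    simp only []
    rw [pow_ent_polar, pdf2_polar]
    rw [Complex.real_smul, Complex.real_smul]
    push_cast
    ring
  rw [integral_μ2_eq, ← integral_comp_polarCoord_symm, polarCoord_target]
  rw [setIntegral_congr_fun (measurableSet_Ioi.prod measurableSet_Ioo) (fun p _ => hF p)]
  rw [Measure.volume_eq_prod,
    setIntegral_prod_mul (fun r : ℝ => ((r ^ (a+b+1) * (π⁻¹ * Real.exp (-r^2)) : ℝ) : ℂ))
      (fun θ : ℝ => Complex.exp (((a:ℂ) - (b:ℂ)) * θ * Complex.I))]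
  by_cases hab : a = b
  · subst hab
    have hG : (fun θ : ℝ => Complex.exp (((a:ℂ) - (a:ℂ)) * θ * Complex.I)) = fun _ => (1:ℂ) := by
      funext θ; rw [sub_self, zero_mul, zero_mul, Complex.exp_zero]
    rw [hG, if_pos rfl]
    rw [setIntegral_const, measureReal_def, Real.volume_Ioo,
      ENNReal.toReal_ofReal (by linarith [pi_pos] : (0:ℝ) ≤ π - -π)]
    have hio : ∫ x in Set.Ioi (0:ℝ), ((x ^ (a+a+1) * (π⁻¹ * Real.exp (-x^2)) : ℝ) : ℂ) =
        ((∫ x in Set.Ioi (0:ℝ), x ^ (a+a+1) * (π⁻¹ * Real.exp (-x^2)) : ℝ) : ℂ) :=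
      integral_ofReal
    rw [hio]
    have hr : ∫ r in Set.Ioi (0:ℝ), r ^ (a+a+1) * (π⁻¹ * Real.exp (-r^2)) =
        π⁻¹ * ((a.factorial : ℝ)/2) := by
      rw [show (fun r : ℝ => r ^ (a+a+1) * (π⁻¹ * Real.exp (-r^2))) =
        (fun r : ℝ => π⁻¹ * (r ^ (2*a+1) * Real.exp (-r^2))) from funext fun r => by
          rw [show 2*a+1 = a+a+1 by ring]; ring,
        integral_const_mul, r_int]
    rw [hr, Complex.real_smul, mul_one]
    push_cast
    have hπ : (π:ℂ) ≠ 0 := Complex.ofReal_ne_zero.mpr pi_ne_zero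
    field_simp
    first
    | exact Or.inl (by ring)
    | ring
  · have hk : ((a:ℤ) - (b:ℤ)) ≠ 0 := sub_ne_zero.mpr (by exact_mod_cast hab)
    have hGG : (fun θ : ℝ => Complex.exp (((a:ℂ) - (b:ℂ)) * θ * Complex.I)) =
        (fun θ : ℝ => Complex.exp ((((a:ℤ) - (b:ℤ) : ℤ):ℂ) * θ * Complex.I)) := by
      push_cast; rfl
    rw [hGG, theta_int _ hk, mul_zero, if_neg hab]

lemma int1 (a b : ℕ) :
    Integrable (fun p : ℝ × ℝ => ent p ^ a * (starRingEnd ℂ) (ent p) ^ b) μ2 := by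
  set m := a + b with hm
  have hpoly : ∀ l : ℕ, Integrable (fun x : ℝ => (1+x^2)^l * Real.exp (-x^2)) volume := by
    intro l
    have hexp : (fun x : ℝ => (1+x^2)^l * Real.exp (-x^2)) =
        (fun x : ℝ => ∑ k ∈ Finset.range (l+1),
          (l.choose k : ℝ) * (x ^ (2*(l-k)) * Real.exp (-x^2))) := by
      funext x
      rw [add_pow, Finset.sum_mul]
      refine Finset.sum_congr rfl fun k _ => ?_
      rw [one_pow, ← pow_mul]
      ring
    rw [hexp]
    refine integrable_finset_sum _ fun k _ => Integrable.const_mul ?_ _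
    have base := integrable_rpow_mul_exp_neg_mul_sq (b := 1) one_pos
      (s := ((2*(l-k) : ℕ) : ℝ)) (lt_of_lt_of_le neg_one_lt_zero (Nat.cast_nonneg _))
    refine base.congr (Filter.Eventually.of_forall fun x => ?_)
    simp only [Real.rpow_natCast, neg_one_mul]
  rw [integrable_μ2_iff]
  have hg : Integrable (fun p : ℝ × ℝ =>
      ((√π)⁻¹ * ((1+p.1^2)^m * Real.exp (-p.1^2))) *
      ((√π)⁻¹ * ((1+p.2^2)^m * Real.exp (-p.2^2)))) volume := by
    rw [Measure.volume_eq_prod]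
    exact (Integrable.const_mul (hpoly m) _).mul_prod (Integrable.const_mul (hpoly m) _)
  refine hg.mono' ?_ (Filter.Eventually.of_forall fun p => ?_)
  · refine Continuous.aestronglyMeasurable ?_
    have hc : Continuous pdf2 := by
      rw [show pdf2 = fun p : ℝ × ℝ =>
        gaussianPDFReal 0 (1/2) p.1 * gaussianPDFReal 0 (1/2) p.2 from rfl, pdf_eq]
      fun_prop
    exact hc.smul ((continuous_ent.pow a).mul
      ((Complex.continuous_conj.comp continuous_ent).pow b))
  · rw [norm_smul, Real.norm_of_nonneg (pdf2_nonneg p)]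
    have h1 : ‖ent p ^ a * (starRingEnd ℂ) (ent p) ^ b‖ = ‖ent p‖ ^ m := by
      rw [norm_mul, norm_pow, norm_pow, RCLike.norm_conj, ← pow_add]
    rw [h1]
    have h2 : ‖ent p‖ ^ m ≤ ((1+p.1^2) * (1+p.2^2)) ^ m := by
      refine pow_le_pow_left₀ (norm_nonneg _) ?_ m
      refine (norm_ent_le p).trans ?_
      nlinarith [sq_nonneg p.1, sq_nonneg p.2, sq_nonneg (p.1*p.2)]
    calc pdf2 p * ‖ent p‖^m ≤ pdf2 p * ((1+p.1^2)*(1+p.2^2))^m :=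
        mul_le_mul_of_nonneg_left h2 (pdf2_nonneg p)
      _ = _ := by rw [pdf2, pdf_eq]; simp only []; rw [mul_pow]; ring

section RPsyn

/-- Type synonym of `ℝ × ℝ` carrying the two-dimensional Gaussian measure as volume. -/
def RP : Type := ℝ × ℝ
instance : MeasurableSpace RP := inferInstanceAs (MeasurableSpace (ℝ × ℝ))
noncomputable instance : MeasureSpace RP := ⟨μ2⟩
instance : IsProbabilityMeasure (volume : Measure RP) := inferInstanceAs (IsProbabilityMeasure μ2)

lemma key_prod_integral {I : Type*} [Fintype I] (f : I → (ℝ × ℝ) → ℂ) :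
    ∫ x : I → ℝ × ℝ, ∏ i, f i (x i) ∂(Measure.pi fun _ => μ2) = ∏ i, ∫ p, f i p ∂μ2 :=
  MeasureTheory.integral_fintype_prod_eq_prod (𝕜 := ℂ) (E := fun _ : I => ℝ × ℝ) (μ := fun _ => μ2) f

lemma key_prod_integrable {I : Type*} [Fintype I] (f : I → (ℝ × ℝ) → ℂ)
    (hf : ∀ i, Integrable (f i) μ2) :
    Integrable (fun x : I → ℝ × ℝ => ∏ i, f i (x i)) (Measure.pi fun _ => μ2) :=
  MeasureTheory.Integrable.fintype_prod_dep (E := fun _ : I => ℝ × ℝ) (μ := fun _ => μ2) hf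

end RPsyn

def be (I : Type*) : (I ⊕ I) ≃ I × Bool where
  toFun := Sum.elim (fun i => (i, true)) (fun i => (i, false))
  invFun p := bif p.2 then Sum.inl p.1 else Sum.inr p.1
  left_inv := by rintro (i | i) <;> rfl
  right_inv := by rintro ⟨i, (_ | _)⟩ <;> rfl

def transportEquiv (I : Type*) : ((I × Bool) → ℝ) ≃ᵐ (I → ℝ × ℝ) :=
  ((MeasurableEquiv.piCongrLeft (fun _ : I × Bool => ℝ) (be I)).symm.trans
    (MeasurableEquiv.sumPiEquivProdPi (fun _ : I ⊕ I => ℝ))).trans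
    (MeasurableEquiv.arrowProdEquivProdArrow ℝ ℝ I).symm

lemma transportEquiv_apply (I : Type*) (ω : (I × Bool) → ℝ) :
    transportEquiv I ω = fun i => (ω (i, true), ω (i, false)) := rfl

lemma transport_mp (I : Type*) [Fintype I] :
    MeasurePreserving (transportEquiv I) (Measure.pi fun _ => γh) (Measure.pi fun _ => μ2) := by
  have mp1 := (measurePreserving_piCongrLeft (fun _ : I × Bool => γh) (be I)).symm
    (MeasurableEquiv.piCongrLeft (fun _ : I × Bool => ℝ) (be I))
  have mp2 := measurePreserving_sumPiEquivProdPi (fun _ : I ⊕ I => γh)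
  have mp3 := (measurePreserving_arrowProdEquivProdArrow ℝ ℝ I (fun _ => γh) (fun _ => γh)).symm
    (MeasurableEquiv.arrowProdEquivProdArrow ℝ ℝ I)
  exact mp3.comp (mp2.comp mp1)

lemma transport_integral (I : Type*) [Fintype I] {E : Type*} [NormedAddCommGroup E]
    [NormedSpace ℝ E] (F : (I → ℝ × ℝ) → E) :
    ∫ ω : (I × Bool) → ℝ, F (fun i => (ω (i, true), ω (i, false))) ∂(Measure.pi fun _ => γh) =
      ∫ x, F x ∂(Measure.pi fun _ => μ2) :=
  (transport_mp I).integral_comp (transportEquiv I).measurableEmbedding F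

lemma transport_integrable (I : Type*) [Fintype I] (F : (I → ℝ × ℝ) → ℂ)
    (h : Integrable F (Measure.pi fun _ => μ2)) :
    Integrable (fun ω : (I × Bool) → ℝ => F (fun i => (ω (i, true), ω (i, false))))
      (Measure.pi fun _ => γh) :=
  ((transport_mp I).integrable_comp_emb (transportEquiv I).measurableEmbedding).mpr h


section EntProd

variable {c : ℕ}

noncomputable def entProd (S T : Fin c → ℕ)
    (σ : (Σ i : Fin c, Fin (S i)) ≃ (Σ j : Fin c, Fin (T j)))
    (x : Fin c × Fin c → ℝ × ℝ) : ℂ :=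
  ∏ k : Σ i : Fin c, Fin (S i), ent (x (k.1, (σ k).1))

lemma entProd_mul_conj (S T : Fin c → ℕ)
    (σ τ : (Σ i : Fin c, Fin (S i)) ≃ (Σ j : Fin c, Fin (T j)))
    (x : Fin c × Fin c → ℝ × ℝ) :
    entProd S T σ x * (starRingEnd ℂ) (entProd S T τ x) =
      ∏ p : Fin c × Fin c,
        (ent (x p) ^ mult S T σ p * (starRingEnd ℂ) (ent (x p)) ^ mult S T τ p) := by
  rw [entProd, entProd, map_prod]
  rw [prod_sigma_eq_prod_pow σ (fun p => ent (x p)),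
    prod_sigma_eq_prod_pow τ (fun p => (starRingEnd ℂ) (ent (x p))),
    ← Finset.prod_mul_distrib]

lemma term_integrable (S T : Fin c → ℕ)
    (σ τ : (Σ i : Fin c, Fin (S i)) ≃ (Σ j : Fin c, Fin (T j))) :
    Integrable (fun x : Fin c × Fin c → ℝ × ℝ =>
      ∏ p : Fin c × Fin c,
        (ent (x p) ^ mult S T σ p * (starRingEnd ℂ) (ent (x p)) ^ mult S T τ p))
      (Measure.pi fun _ => μ2) :=
  key_prod_integrable _ (fun p => int1 _ _)

lemma term_integral (S T : Fin c → ℕ)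
    (σ τ : (Σ i : Fin c, Fin (S i)) ≃ (Σ j : Fin c, Fin (T j))) :
    ∫ x, (∏ p : Fin c × Fin c,
        (ent (x p) ^ mult S T σ p * (starRingEnd ℂ) (ent (x p)) ^ mult S T τ p))
      ∂(Measure.pi fun _ => μ2) =
      ∏ p : Fin c × Fin c,
        (if mult S T σ p = mult S T τ p then ((mult S T σ p).factorial : ℂ) else 0) := by
  rw [key_prod_integral
    (fun p q => ent q ^ mult S T σ p * (starRingEnd ℂ) (ent q) ^ mult S T τ p)]
  exact Finset.prod_congr rfl fun p _ => mom _ _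

end EntProd

end GaussPerm

end

theorem expectation_normSq_perm_repeated (c n : ℕ) (S T : Fin c → ℕ)
    (hS : ∑ i, S i = n) (hT : ∑ j, T j = n) :
    ∫ ω, Complex.normSq (permRep (gaussianMatrix c ω) S T)
        ∂(Measure.pi fun _ : (Fin c × Fin c) × Bool => gaussianReal 0 (1 / 2)) =
      (n.factorial : ℝ) * (∏ i, ((S i).factorial : ℝ)) * ∏ j, ((T j).factorial : ℝ) := by
  classical
  have hexpand : (fun x : Fin c × Fin c → ℝ × ℝ =>
      (∑ σ : (Σ i : Fin c, Fin (S i)) ≃ (Σ j : Fin c, Fin (T j)), GaussPerm.entProd S T σ x) *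
        (starRingEnd ℂ)
          (∑ σ : (Σ i : Fin c, Fin (S i)) ≃ (Σ j : Fin c, Fin (T j)),
            GaussPerm.entProd S T σ x)) =
      fun x => ∑ σ : (Σ i : Fin c, Fin (S i)) ≃ (Σ j : Fin c, Fin (T j)),
        ∑ τ : (Σ i : Fin c, Fin (S i)) ≃ (Σ j : Fin c, Fin (T j)),
          ∏ p : Fin c × Fin c,
            (GaussPerm.ent (x p) ^ mult S T σ p *
              (starRingEnd ℂ) (GaussPerm.ent (x p)) ^ mult S T τ p) := by
    funext x
    rw [map_sum, Finset.sum_mul_sum]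
    exact Finset.sum_congr rfl fun σ _ => Finset.sum_congr rfl fun τ _ =>
      GaussPerm.entProd_mul_conj S T σ τ x
  have hint : Integrable (fun x : Fin c × Fin c → ℝ × ℝ =>
      (∑ σ : (Σ i : Fin c, Fin (S i)) ≃ (Σ j : Fin c, Fin (T j)), GaussPerm.entProd S T σ x) *
        (starRingEnd ℂ)
          (∑ σ : (Σ i : Fin c, Fin (S i)) ≃ (Σ j : Fin c, Fin (T j)),
            GaussPerm.entProd S T σ x)) (Measure.pi fun _ => GaussPerm.μ2) := by
    rw [hexpand]
    exact integrable_finset_sum _ fun σ _ => integrable_finset_sum _ fun τ _ =>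
      GaussPerm.term_integrable S T σ τ
  have hre : ∀ z : ℂ, Complex.normSq z = (z * (starRingEnd ℂ) z).re := fun z => by
    rw [Complex.mul_conj, Complex.ofReal_re]
  have hperm : ∀ ω : (Fin c × Fin c) × Bool → ℝ,
      permRep (gaussianMatrix c ω) S T =
        ∑ σ : (Σ i : Fin c, Fin (S i)) ≃ (Σ j : Fin c, Fin (T j)),
          GaussPerm.entProd S T σ (fun i => (ω (i, true), ω (i, false))) := fun ω => rfl
  calc
    ∫ ω, Complex.normSq (permRep (gaussianMatrix c ω) S T)
        ∂(Measure.pi fun _ : (Fin c × Fin c) × Bool => gaussianReal 0 (1 / 2))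
    _ = ∫ ω : (Fin c × Fin c) × Bool → ℝ,
        (fun x : Fin c × Fin c → ℝ × ℝ =>
          ((∑ σ : (Σ i : Fin c, Fin (S i)) ≃ (Σ j : Fin c, Fin (T j)),
              GaussPerm.entProd S T σ x) *
            (starRingEnd ℂ)
              (∑ σ : (Σ i : Fin c, Fin (S i)) ≃ (Σ j : Fin c, Fin (T j)),
                GaussPerm.entProd S T σ x)).re)
          (fun i => (ω (i, true), ω (i, false)))
        ∂(Measure.pi fun _ => GaussPerm.γh) := by
      refine integral_congr_ae (Filter.Eventually.of_forall fun ω => ?_)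
      show Complex.normSq (permRep (gaussianMatrix c ω) S T) = _
      rw [hre, hperm ω]
    _ = ∫ x, ((∑ σ : (Σ i : Fin c, Fin (S i)) ≃ (Σ j : Fin c, Fin (T j)),
              GaussPerm.entProd S T σ x) *
            (starRingEnd ℂ)
              (∑ σ : (Σ i : Fin c, Fin (S i)) ≃ (Σ j : Fin c, Fin (T j)),
                GaussPerm.entProd S T σ x)).re
        ∂(Measure.pi fun _ => GaussPerm.μ2) :=
      GaussPerm.transport_integral (Fin c × Fin c)
        (fun x => ((∑ σ : (Σ i : Fin c, Fin (S i)) ≃ (Σ j : Fin c, Fin (T j)),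
              GaussPerm.entProd S T σ x) *
            (starRingEnd ℂ)
              (∑ σ : (Σ i : Fin c, Fin (S i)) ≃ (Σ j : Fin c, Fin (T j)),
                GaussPerm.entProd S T σ x)).re)
    _ = (∫ x, ((∑ σ : (Σ i : Fin c, Fin (S i)) ≃ (Σ j : Fin c, Fin (T j)),
              GaussPerm.entProd S T σ x) *
            (starRingEnd ℂ)
              (∑ σ : (Σ i : Fin c, Fin (S i)) ≃ (Σ j : Fin c, Fin (T j)),
                GaussPerm.entProd S T σ x))
        ∂(Measure.pi fun _ => GaussPerm.μ2)).re := by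
      rw [← RCLike.re_eq_complex_re, ← integral_re hint, RCLike.re_eq_complex_re]
    _ = ((n.factorial * (∏ i, (S i).factorial) * ∏ j, (T j).factorial : ℕ) : ℂ).re := by
      rw [hexpand]
      rw [integral_finset_sum _ fun σ _ => integrable_finset_sum _ fun τ _ =>
        GaussPerm.term_integrable S T σ τ]
      have h1 : ∀ σ : (Σ i : Fin c, Fin (S i)) ≃ (Σ j : Fin c, Fin (T j)),
          ∫ x, (∑ τ : (Σ i : Fin c, Fin (S i)) ≃ (Σ j : Fin c, Fin (T j)),
            ∏ p : Fin c × Fin c,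
              (GaussPerm.ent (x p) ^ mult S T σ p *
                (starRingEnd ℂ) (GaussPerm.ent (x p)) ^ mult S T τ p))
            ∂(Measure.pi fun _ => GaussPerm.μ2) =
          ∑ τ : (Σ i : Fin c, Fin (S i)) ≃ (Σ j : Fin c, Fin (T j)),
            ∏ p : Fin c × Fin c,
              (if mult S T σ p = mult S T τ p then ((mult S T σ p).factorial : ℂ) else 0) := by
        intro σ
        rw [integral_finset_sum _ fun τ _ => GaussPerm.term_integrable S T σ τ]
        exact Finset.sum_congr rfl fun τ _ => GaussPerm.term_integral S T σ τ
      rw [Finset.sum_congr rfl fun σ _ => h1 σ]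
      rw [← stepD S T hS hT]
      push_cast
      rfl
    _ = (n.factorial : ℝ) * (∏ i, ((S i).factorial : ℝ)) * ∏ j, ((T j).factorial : ℝ) := by
      rw [Complex.natCast_re]
      push_cast
      ring
end

section
/- Summing the counting identity over all block-sum matrices: ∑_{M ∈ M_{S,T}} ∏_{i=1}^c ∏_{j=1}^c (s_i! t_j!)/M_{i,j}! = n!, where M_{S,T} is the set of c×c matrices of non-negative integers with row sums s_1,...,s_c and column sums t_1,...,t_c and ∑ s_i = ∑ t_j = n. (Here the product convention is that for each pair (i,j) the factor s_i! t_j! appears with appropriate multiplicity so that ∏_{i,j} s_i!t_j!/M_{i,j}! = (∏_i s_i!)(∏_j t_j!)/∏_{i,j} M_{i,j}!.) -/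
open Finset

-- cast of `Nat.multinomial` to `ℚ`
lemma multinomial_cast_aux {α : Type*} (s : Finset α) (g : α → ℕ) :
    (Nat.multinomial s g : ℚ) =
      ((∑ i ∈ s, g i).factorial : ℚ) / ∏ i ∈ s, ((g i).factorial : ℚ) := by
  rw [eq_div_iff (by positivity), mul_comm]
  exact_mod_cast congrArg (Nat.cast : ℕ → ℚ) (Nat.multinomial_spec s g)

-- coefficient of `(∑ X i) ^ m`
lemma coeff_sum_X_pow_aux (c m : ℕ) (d : Fin c →₀ ℕ) :
    MvPolynomial.coeff d ((∑ i : Fin c, MvPolynomial.X i : MvPolynomial (Fin c) ℚ) ^ m) =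
      if ∑ i, d i = m then (Nat.multinomial Finset.univ d : ℚ) else 0 := by
  classical
  rw [Finset.sum_pow_eq_sum_piAntidiag, MvPolynomial.coeff_sum]
  have hmono : ∀ k : Fin c → ℕ,
      (∏ i : Fin c, (MvPolynomial.X i : MvPolynomial (Fin c) ℚ) ^ k i) =
        MvPolynomial.monomial (Finsupp.equivFunOnFinite.symm k) 1 := by
    intro k
    rw [← MvPolynomial.prod_X_pow_eq_monomial]
    refine (Finset.prod_subset (Finset.subset_univ _) ?_).symm
    intro i _ hi
    have : (Finsupp.equivFunOnFinite.symm k) i = 0 := by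
      simpa using Finsupp.notMem_support_iff.mp hi
    simp only [Finsupp.coe_equivFunOnFinite_symm] at this ⊢
    simp [this]
  have hterm : ∀ k ∈ Finset.piAntidiag Finset.univ m,
      MvPolynomial.coeff d ((Nat.multinomial Finset.univ k : MvPolynomial (Fin c) ℚ) *
        ∏ i : Fin c, MvPolynomial.X i ^ k i) =
      if k = ⇑d then (Nat.multinomial Finset.univ k : ℚ) else 0 := by
    intro k _
    rw [hmono k, ← map_natCast (MvPolynomial.C : ℚ →+* MvPolynomial (Fin c) ℚ),
      MvPolynomial.coeff_C_mul, MvPolynomial.coeff_monomial]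
    have : (Finsupp.equivFunOnFinite.symm k = d) ↔ k = ⇑d := by
      constructor
      · intro h; rw [← h]; rfl
      · intro h; apply Finsupp.equivFunOnFinite.injective; ext i; simp [h]
    by_cases h : k = ⇑d
    · rw [if_pos (this.mpr h), if_pos h, mul_one]
    · rw [if_neg (fun hh => h (this.mp hh)), if_neg h, mul_zero]
  rw [Finset.sum_congr rfl hterm, Finset.sum_ite_eq' (Finset.piAntidiag Finset.univ m) (⇑d)]
  simp [Finset.mem_piAntidiag]

theorem sum_over_blockSum_matrices (c n : ℕ) (S T : Fin c → ℕ)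
    (hS : ∑ i, S i = n) (hT : ∑ j, T j = n) :
    ∑ M ∈ Finset.univ.filter
        (fun M : Fin c → Fin c → Fin (n + 1) =>
          (∀ i, ∑ j, ((M i j : ℕ)) = S i) ∧ (∀ j, ∑ i, ((M i j : ℕ)) = T j)),
      ((∏ i, ((S i).factorial : ℚ)) * ∏ j, ((T j).factorial : ℚ)) /
        ∏ i, ∏ j, (((M i j : ℕ)).factorial : ℚ) =
      (n.factorial : ℚ) := by
  classical
  set f : MvPolynomial (Fin c) ℚ := ∑ i : Fin c, MvPolynomial.X i with hf
  set d : Fin c →₀ ℕ := Finsupp.equivFunOnFinite.symm S with hdd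
  have hd : ∀ i, d i = S i := fun i => rfl
  have h1 : MvPolynomial.coeff d (f ^ n) = (n.factorial : ℚ) / ∏ i, ((S i).factorial : ℚ) := by
    rw [coeff_sum_X_pow_aux]
    have hsum : ∑ i, d i = n := by simpa [hd] using hS
    rw [if_pos hsum, multinomial_cast_aux]
    simp only [hd]
    rw [hS]
  have h2 : (f : MvPowerSeries (Fin c) ℚ) ^ n =
      ∏ j : Fin c, (f : MvPowerSeries (Fin c) ℚ) ^ (T j) := by
    rw [Finset.prod_pow_eq_pow_sum, hT]
  have h3 : MvPolynomial.coeff d (f ^ n) =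
      ∑ l ∈ Finset.finsuppAntidiag (Finset.univ : Finset (Fin c)) d,
        ∏ j : Fin c,
          (if ∑ i, (l j) i = T j then (Nat.multinomial Finset.univ (l j) : ℚ) else 0) := by
    rw [← MvPolynomial.coeff_coe, MvPolynomial.coe_pow, h2, MvPowerSeries.coeff_prod]
    refine Finset.sum_congr rfl fun l _ => Finset.prod_congr rfl fun j _ => ?_
    rw [← MvPolynomial.coe_pow, MvPolynomial.coeff_coe, coeff_sum_X_pow_aux]
  have h4 : ∑ l ∈ Finset.finsuppAntidiag (Finset.univ : Finset (Fin c)) d,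
        ∏ j : Fin c,
          (if ∑ i, (l j) i = T j then (Nat.multinomial Finset.univ (l j) : ℚ) else 0) =
      ∑ l ∈ (Finset.finsuppAntidiag (Finset.univ : Finset (Fin c)) d).filter
          (fun l => ∀ j, ∑ i, (l j) i = T j),
        ∏ j : Fin c, (Nat.multinomial Finset.univ (l j) : ℚ) := by
    rw [Finset.sum_filter]
    refine Finset.sum_congr rfl fun l _ => ?_
    by_cases h : ∀ j, ∑ i, (l j) i = T j
    · rw [if_pos h]
      exact Finset.prod_congr rfl fun j _ => if_pos (h j)
    · rw [if_neg h]
      push_neg at h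
      obtain ⟨j, hj⟩ := h
      exact Finset.prod_eq_zero (Finset.mem_univ j) (if_neg hj)
  -- the bijection with matrices
  have h5 : ∑ l ∈ (Finset.finsuppAntidiag (Finset.univ : Finset (Fin c)) d).filter
        (fun l => ∀ j, ∑ i, (l j) i = T j),
      ∏ j : Fin c, (Nat.multinomial Finset.univ (l j) : ℚ)
    = ∑ M ∈ Finset.univ.filter
        (fun M : Fin c → Fin c → Fin (n + 1) =>
          (∀ i, ∑ j, ((M i j : ℕ)) = S i) ∧ (∀ j, ∑ i, ((M i j : ℕ)) = T j)),
      ∏ j : Fin c, (Nat.multinomial Finset.univ (fun i => (M i j : ℕ)) : ℚ) := by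
    have hbound : ∀ l ∈ (Finset.finsuppAntidiag (Finset.univ : Finset (Fin c)) d).filter
        (fun l => ∀ j, ∑ i, (l j) i = T j), ∀ a b : Fin c, (l b) a < n + 1 := by
      intro l hl a b
      rw [Finset.mem_filter] at hl
      have h1 : (l b) a ≤ ∑ i, (l b) i :=
        Finset.single_le_sum (fun i _ => Nat.zero_le _) (Finset.mem_univ a)
      have h2 : T b ≤ n := hT ▸ Finset.single_le_sum (f := T) (fun i _ => Nat.zero_le _)
        (Finset.mem_univ b)
      have h3 := hl.2 b
      omega
    refine Finset.sum_bij'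
      (i := fun l hl => fun a b => (⟨(l b) a, hbound l hl a b⟩ : Fin (n + 1)))
      (j := fun M _ => Finsupp.equivFunOnFinite.symm
        (fun b => Finsupp.equivFunOnFinite.symm (fun a => (M a b : ℕ))))
      ?_ ?_ ?_ ?_ ?_
    · intro l hl
      rw [Finset.mem_filter] at hl ⊢
      obtain ⟨hl1, hl2⟩ := hl
      rw [Finset.mem_finsuppAntidiag] at hl1
      refine ⟨Finset.mem_univ _, fun a => ?_, fun b => by simpa using hl2 b⟩
      have := congrArg (fun g => g a) (congrArg DFunLike.coe hl1.1)
      simpa [Finsupp.finset_sum_apply, hd] using this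
    · intro M hM
      rw [Finset.mem_filter] at hM ⊢
      obtain ⟨-, hM1, hM2⟩ := hM
      constructor
      · rw [Finset.mem_finsuppAntidiag]
        refine ⟨?_, Finset.subset_univ _⟩
        ext a
        rw [Finsupp.finset_sum_apply]
        simpa [hd] using hM1 a
      · intro b
        simpa using hM2 b
    · intro l hl
      apply Finsupp.equivFunOnFinite.injective
      ext b a
      simp
    · intro M hM
      funext a b
      apply Fin.ext
      simp
    · intro l hl
      exact Finset.prod_congr rfl fun j _ => by norm_num
  -- rewrite each summand of the goal
  have h6 : ∀ M ∈ Finset.univ.filter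
        (fun M : Fin c → Fin c → Fin (n + 1) =>
          (∀ i, ∑ j, ((M i j : ℕ)) = S i) ∧ (∀ j, ∑ i, ((M i j : ℕ)) = T j)),
      ((∏ i, ((S i).factorial : ℚ)) * ∏ j, ((T j).factorial : ℚ)) /
          ∏ i, ∏ j, (((M i j : ℕ)).factorial : ℚ) =
        (∏ i, ((S i).factorial : ℚ)) *
          ∏ j : Fin c, (Nat.multinomial Finset.univ (fun i => (M i j : ℕ)) : ℚ) := by
    intro M hM
    rw [Finset.mem_filter] at hM
    obtain ⟨-, -, hM2⟩ := hM
    have : ∀ j : Fin c, (Nat.multinomial Finset.univ (fun i => (M i j : ℕ)) : ℚ) =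
        ((T j).factorial : ℚ) / ∏ i, (((M i j : ℕ)).factorial : ℚ) := by
      intro j
      rw [multinomial_cast_aux, hM2 j]
    rw [Finset.prod_congr rfl fun j _ => this j, Finset.prod_div_distrib,
      Finset.prod_comm (f := fun j i => (((M i j : ℕ)).factorial : ℚ)), mul_div_assoc]
  rw [Finset.sum_congr rfl h6, ← Finset.mul_sum, ← h5, ← h4, ← h3, h1,
    mul_div_cancel₀ _ (by positivity)]
end

section
/- Let p_α(σ) = (α/π)√(4 − α^2 σ^2) on [0, 2/α] (the quarter-circle density). Then ∫_0^{2/α} p_α(σ) · σ^2/(1−σ^2) dσ = (1/2)(α^2(1 − √(1 − 4/α^2)) − 2) for α > 2. Consequently, the expected mean photon number is m times this quantity, and as α → ∞ this expression tends to 1/α^2 · (1 + o(1)); more precisely it is bounded above by 2/α^2 for α ≥ 2√2. -/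
set_option maxHeartbeats 1000000


open Real intervalIntegral

theorem quarterCircle_mean_photon_number (α : ℝ) (hα : 2 < α) :
    (∫ σ in (0 : ℝ)..(2 / α),
        (α / Real.pi) * Real.sqrt (4 - α ^ 2 * σ ^ 2) * (σ ^ 2 / (1 - σ ^ 2))) =
      (1 / 2) * (α ^ 2 * (1 - Real.sqrt (1 - 4 / α ^ 2)) - 2) ∧
    (2 * Real.sqrt 2 ≤ α →
      (1 / 2) * (α ^ 2 * (1 - Real.sqrt (1 - 4 / α ^ 2)) - 2) ≤ 2 / α ^ 2) := by
  have hα0 : (0:ℝ) < α := by linarith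
  have hc1 : 2 / α < 1 := by rw [div_lt_one hα0]; linarith
  have hc0 : (0:ℝ) < 2 / α := by positivity
  have hπ : (0:ℝ) < π := Real.pi_pos
  set S := Real.sqrt (α ^ 2 - 4) with hSdef
  have hSsq : S ^ 2 = α ^ 2 - 4 := Real.sq_sqrt (by nlinarith)
  have hSpos : 0 < S := Real.sqrt_pos.mpr (by nlinarith)
  have hsqrt14 : Real.sqrt (1 - 4 / α ^ 2) = S / α := by
    rw [show 1 - 4 / α ^ 2 = (S / α) ^ 2 by field_simp; nlinarith [hSsq]]
    exact Real.sqrt_sq (by positivity)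
  set F : ℝ → ℝ := fun x => (1 / π) * ((α ^ 2 - 2) * Real.arcsin (α * x / 2)
      - α * S * Real.arcsin (S * x / (2 * Real.sqrt (1 - x ^ 2)))
      - α / 2 * x * Real.sqrt (4 - α ^ 2 * x ^ 2)) with hFdef
  have key : (∫ σ in (0 : ℝ)..(2 / α),
      (α / π) * Real.sqrt (4 - α ^ 2 * σ ^ 2) * (σ ^ 2 / (1 - σ ^ 2))) = F (2 / α) - F 0 := by
    apply intervalIntegral.integral_eq_sub_of_hasDeriv_right_of_le hc0.le
    · -- continuity of F on Icc
      apply ContinuousOn.mul continuousOn_const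
      apply ContinuousOn.sub
      apply ContinuousOn.sub
      · exact continuousOn_const.mul
          ((Real.continuous_arcsin.comp (by continuity : Continuous fun x : ℝ => α * x / 2)).continuousOn)
      · apply ContinuousOn.mul continuousOn_const
        apply Real.continuous_arcsin.comp_continuousOn
        apply ContinuousOn.div (by fun_prop) (by fun_prop)
        intro x hx
        have hx1 : x < 1 := lt_of_le_of_lt hx.2 hc1
        have : 0 < 1 - x ^ 2 := by nlinarith [hx.1]
        positivity
      · fun_prop
    · -- derivative on Ioo
      intro x hx
      obtain ⟨hx0, hxc⟩ := hx
      have hx1 : x < 1 := lt_trans hxc hc1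
      have hax : α * x < 2 := by
        nlinarith [(lt_div_iff₀ hα0).mp hxc]
      have hA : 0 < 4 - α ^ 2 * x ^ 2 := by nlinarith [mul_pos hα0 hx0]
      have hB : 0 < 1 - x ^ 2 := by nlinarith
      set A := Real.sqrt (4 - α ^ 2 * x ^ 2) with hAdef
      set B := Real.sqrt (1 - x ^ 2) with hBdef
      have hApos : 0 < A := Real.sqrt_pos.mpr hA
      have hAsq : A ^ 2 = 4 - α ^ 2 * x ^ 2 := Real.sq_sqrt hA.le
      have hBpos : 0 < B := Real.sqrt_pos.mpr hB
      have hBsq : B ^ 2 = 1 - x ^ 2 := Real.sq_sqrt hB.le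
      have e1 : Real.sqrt (1 - (α * x / 2) ^ 2) = A / 2 := by
        rw [show 1 - (α * x / 2) ^ 2 = (A / 2) ^ 2 by ring_nf; linarith [hAsq]]
        exact Real.sqrt_sq (by positivity)
      have e2 : Real.sqrt (1 - (S * x / (2 * B)) ^ 2) = A / (2 * B) := by
        rw [show 1 - (S * x / (2 * B)) ^ 2 = (A / (2 * B)) ^ 2 by
          field_simp
          nlinarith [hAsq, hBsq, hSsq]]
        exact Real.sqrt_sq (by positivity)
      -- piece 1 : arcsin (α x / 2)
      have hαx0 : 0 < α * x := mul_pos hα0 hx0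
      have h1ne : α * x / 2 ≠ -1 := by intro h; nlinarith
      have h1ne' : α * x / 2 ≠ 1 := by intro h; nlinarith
      have du1 : HasDerivAt (fun y : ℝ => α * y / 2) (α / 2) x := by
        simpa using ((hasDerivAt_id x).const_mul α).div_const 2
      have d1 : HasDerivAt (fun y => Real.arcsin (α * y / 2))
          (1 / (A / 2) * (α / 2)) x := by
        have h := (Real.hasDerivAt_arcsin h1ne h1ne').comp x du1
        rwa [e1] at h
      -- piece 2 : arcsin (S x / (2 √(1-x²)))
      have du2B : HasDerivAt (fun y : ℝ => 1 - y ^ 2) (-(2 * x)) x := by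
        simpa using (hasDerivAt_pow 2 x).const_sub 1
      have dB : HasDerivAt (fun y : ℝ => Real.sqrt (1 - y ^ 2))
          (-(2 * x) / (2 * B)) x := du2B.sqrt (by rw [← hBsq]; positivity)
      have dDen : HasDerivAt (fun y : ℝ => 2 * Real.sqrt (1 - y ^ 2))
          (2 * (-(2 * x) / (2 * B))) x := dB.const_mul 2
      have dNum : HasDerivAt (fun y : ℝ => S * y) S x := by
        simpa using (hasDerivAt_id x).const_mul S
      have du2 : HasDerivAt (fun y : ℝ => S * y / (2 * Real.sqrt (1 - y ^ 2)))
          ((S * (2 * B) - S * x * (2 * (-(2 * x) / (2 * B)))) / (2 * B) ^ 2) x :=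
        dNum.div dDen (by positivity)
      have h2sq : (S * x / (2 * B)) ^ 2 < 1 := by
        rw [div_pow, div_lt_one (by positivity)]
        nlinarith [hSsq, hBsq]
      have h2ne : S * x / (2 * B) ≠ -1 := by
        intro h; rw [h] at h2sq; norm_num at h2sq
      have h2ne' : S * x / (2 * B) ≠ 1 := by
        intro h; rw [h] at h2sq; norm_num at h2sq
      have d2 : HasDerivAt (fun y => Real.arcsin (S * y / (2 * Real.sqrt (1 - y ^ 2))))
          (1 / (A / (2 * B)) *
            ((S * (2 * B) - S * x * (2 * (-(2 * x) / (2 * B)))) / (2 * B) ^ 2)) x := by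
        have h := (Real.hasDerivAt_arcsin h2ne h2ne').comp x du2
        rwa [e2] at h
      -- piece 3 : (α/2) x √(4-α²x²)
      have du3 : HasDerivAt (fun y : ℝ => 4 - α ^ 2 * y ^ 2) (-(α ^ 2 * (2 * x))) x := by
        simpa using ((hasDerivAt_pow 2 x).const_mul (α ^ 2)).const_sub 4
      have dA : HasDerivAt (fun y : ℝ => Real.sqrt (4 - α ^ 2 * y ^ 2))
          (-(α ^ 2 * (2 * x)) / (2 * A)) x := du3.sqrt (by rw [← hAsq]; positivity)
      have dLin : HasDerivAt (fun y : ℝ => α / 2 * y) (α / 2) x := by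
        simpa using (hasDerivAt_id x).const_mul (α / 2)
      have d3 : HasDerivAt (fun y : ℝ => α / 2 * y * Real.sqrt (4 - α ^ 2 * y ^ 2))
          (α / 2 * A + α / 2 * x * (-(α ^ 2 * (2 * x)) / (2 * A))) x :=
        dLin.mul dA
      -- assemble
      have dF : HasDerivAt F ((1 / π) * ((α ^ 2 - 2) * (1 / (A / 2) * (α / 2))
          - α * S * (1 / (A / (2 * B)) *
              ((S * (2 * B) - S * x * (2 * (-(2 * x) / (2 * B)))) / (2 * B) ^ 2))
          - (α / 2 * A + α / 2 * x * (-(α ^ 2 * (2 * x)) / (2 * A))))) x := by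
        exact (((d1.const_mul (α ^ 2 - 2)).sub (d2.const_mul (α * S))).sub d3).const_mul (1 / π)
      have heq : (1 / π) * ((α ^ 2 - 2) * (1 / (A / 2) * (α / 2))
          - α * S * (1 / (A / (2 * B)) *
              ((S * (2 * B) - S * x * (2 * (-(2 * x) / (2 * B)))) / (2 * B) ^ 2))
          - (α / 2 * A + α / 2 * x * (-(α ^ 2 * (2 * x)) / (2 * A))))
          = α / π * A * (x ^ 2 / (1 - x ^ 2)) := by
        rw [← hBsq]
        field_simp
        linear_combination (-2*(B^2+x^2)) * hSsq
          + (-(B^2+2*x^2)) * hAsq + (2*α^2*x^2) * hBsq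
      rw [← heq]
      exact dF.hasDerivWithinAt
    · -- integrability
      rw [intervalIntegrable_iff_integrableOn_Icc_of_le hc0.le]
      apply ContinuousOn.integrableOn_Icc
      apply ContinuousOn.mul (by fun_prop)
      apply ContinuousOn.div (by fun_prop) (by fun_prop)
      intro x hx
      have hx1 : x < 1 := lt_of_le_of_lt hx.2 hc1
      have := hx.1
      nlinarith
  -- evaluate F at the endpoints
  have hF0 : F 0 = 0 := by simp [hFdef]
  have hB14 : Real.sqrt (1 - (2 / α) ^ 2) = S / α := by
    rw [show 1 - (2 / α) ^ 2 = 1 - 4 / α ^ 2 by ring]; exact hsqrt14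
  have hFc : F (2 / α) = (1 / 2) * (α ^ 2 * (1 - S / α) - 2) := by
    rw [hFdef]
    have e3 : α * (2 / α) / 2 = 1 := by field_simp
    have e4 : S * (2 / α) / (2 * Real.sqrt (1 - (2 / α) ^ 2)) = 1 := by
      rw [hB14]; field_simp
    have e5 : Real.sqrt (4 - α ^ 2 * (2 / α) ^ 2) = 0 := by
      rw [show 4 - α ^ 2 * (2 / α) ^ 2 = 0 by field_simp; norm_num]
      exact Real.sqrt_zero
    simp only [e3, e4, e5, Real.arcsin_one, mul_zero]
    field_simp
    ring
  constructor
  · rw [key, hF0, hFc, hsqrt14]; ring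
  · intro h8
    rw [hsqrt14]
    have hα8 : 8 ≤ α ^ 2 := by
      nlinarith [Real.sq_sqrt (by norm_num : (0:ℝ) ≤ 2), Real.sqrt_nonneg (2:ℝ)]
    rw [le_div_iff₀ (by positivity), ← sub_nonneg]
    have hkey : α ^ 3 * S ≥ α ^ 4 - 2 * α ^ 2 - 4 := by
      have ha : 0 ≤ α ^ 3 * S := by positivity
      have h1 : (α ^ 3 * S) ^ 2 = α ^ 6 * (α ^ 2 - 4) := by rw [mul_pow, hSsq]; ring
      have h2 : (α ^ 4 - 2 * α ^ 2 - 4) ^ 2 ≤ (α ^ 3 * S) ^ 2 := by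
        rw [h1]; nlinarith [hα8, sq_nonneg (α ^ 2 - 8)]
      have hb0 : 0 < α ^ 4 - 2 * α ^ 2 - 4 := by nlinarith [hα8, sq_nonneg (α ^ 2 - 8)]
      nlinarith [h2, ha, hb0]
    have : (1 / 2) * (α ^ 2 * (1 - S / α) - 2) * α ^ 2 = (α ^ 4 - α ^ 3 * S - 2 * α ^ 2) / 2 := by
      field_simp
    rw [this]; linarith
end

section
/- Let p_α(σ) = (α/π)√(4 − α^2 σ^2) on [0, 2/α] with α(μ) = (1+μ)/√μ for 0 < μ < 1. Then ∫_0^{2/α} p_α(σ) · (1/(1−σ^2))^2 dσ = (1+μ)/(1−μ) and ∫_0^{2/α} p_α(σ) · (σ/(1−σ^2))^2 dσ = μ(1+μ)/(1−μ). -/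
open Real intervalIntegral
open Set

-- derivative of arcsin(x/a)
lemma hd1 {a x : ℝ} (ha : 0 < a) (hx0 : 0 ≤ x) (hxa : x < a) :
    HasDerivAt (fun y => Real.arcsin (y / a)) (1 / Real.sqrt (a^2 - x^2)) x := by
  have hne : x / a ≠ 1 := by
    have : x / a < 1 := (div_lt_one ha).2 hxa
    linarith
  have hne' : x / a ≠ -1 := by
    have : 0 ≤ x / a := div_nonneg hx0 ha.le
    linarith
  have h := (Real.hasDerivAt_arcsin hne' hne).comp x ((hasDerivAt_id x).div_const a)
  refine h.congr_deriv (Eq.symm ?_)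
  have h1 : 1 - (x/a)^2 = (a^2 - x^2)/a^2 := by field_simp
  rw [h1, Real.sqrt_div (by nlinarith) , Real.sqrt_sq ha.le]
  have h2 : Real.sqrt (a^2 - x^2) > 0 := Real.sqrt_pos.2 (by nlinarith)
  field_simp

lemma hd2 {a c x : ℝ} (ha : 0 < a) (ha1 : a < 1) (hc : c = Real.sqrt (1 - a^2))
    (hx0 : 0 ≤ x) (hxa : x < a) :
    HasDerivAt (fun y => Real.arcsin (c * y / (a * Real.sqrt (1 - y^2))))
      (c / (Real.sqrt (a^2 - x^2) * (1 - x^2))) x := by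
  have hx1 : x < 1 := hxa.trans ha1
  have h1x : 0 < 1 - x^2 := by nlinarith
  have hax : 0 < a^2 - x^2 := by nlinarith
  have hc0 : 0 < c := hc ▸ Real.sqrt_pos.2 (by nlinarith)
  have hc2 : c^2 = 1 - a^2 := by rw [hc]; exact Real.sq_sqrt (by nlinarith)
  set s1 := Real.sqrt (1 - x^2) with hs1def
  set s2 := Real.sqrt (a^2 - x^2) with hs2def
  have hs1 : 0 < s1 := Real.sqrt_pos.2 h1x
  have hs2 : 0 < s2 := Real.sqrt_pos.2 hax
  have hs1sq : s1^2 = 1 - x^2 := Real.sq_sqrt h1x.le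
  have hs2sq : s2^2 = a^2 - x^2 := Real.sq_sqrt hax.le
  -- derivative of inner function
  have hin : HasDerivAt (fun y => 1 - y^2) (-(2*x)) x := by
    have := ((hasDerivAt_pow 2 x).const_sub 1)
    simpa using this
  have hsq : HasDerivAt (fun y => Real.sqrt (1 - y^2)) (-(2*x) / (2 * s1)) x :=
    hin.sqrt h1x.ne'
  have hden : HasDerivAt (fun y => a * Real.sqrt (1 - y^2)) (a * (-(2*x) / (2 * s1))) x :=
    hsq.const_mul a
  have hnum : HasDerivAt (fun y => c * y) c x := by
    simpa using (hasDerivAt_id x).const_mul c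
  have hg : HasDerivAt (fun y => c * y / (a * Real.sqrt (1 - y^2)))
      ((c * (a * s1) - c * x * (a * (-(2*x) / (2 * s1)))) / (a * s1)^2) x :=
    hnum.div hden (by positivity)
  -- arcsin composition
  have hu : c * x / (a * s1) < 1 := by
    rw [div_lt_one (by positivity)]
    have key : (c*x)^2 < (a*s1)^2 := by
      rw [mul_pow, mul_pow, hs1sq, hc2]; nlinarith
    exact lt_of_pow_lt_pow_left₀ 2 (by positivity) key
  have hu0 : 0 ≤ c * x / (a * s1) := by positivity
  have harc := (Real.hasDerivAt_arcsin (by linarith : c * x / (a * s1) ≠ -1)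
    (ne_of_lt hu)).comp x hg
  refine harc.congr_deriv (Eq.symm ?_)
  have hval : Real.sqrt (1 - (c * x / (a * s1))^2) = s2 / (a * s1) := by
    have : 1 - (c * x / (a * s1))^2 = (s2 / (a * s1))^2 := by
      rw [div_pow, div_pow, mul_pow, mul_pow, hs1sq, hs2sq, hc2]
      field_simp
      ring
    rw [this, Real.sqrt_sq (by positivity)]
  rw [hval]
  field_simp
  linear_combination x^2 * hs1sq

lemma hd3 {a x : ℝ} (ha : 0 < a) (ha1 : a < 1) (hx0 : 0 ≤ x) (hxa : x < a) :
    HasDerivAt (fun y => y * Real.sqrt (a^2 - y^2) / (1 - y^2))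
      ((a^2 + (a^2 - 2) * x^2) / (Real.sqrt (a^2 - x^2) * (1 - x^2)^2)) x := by
  have hx1 : x < 1 := hxa.trans ha1
  have h1x : 0 < 1 - x^2 := by nlinarith
  have hax : 0 < a^2 - x^2 := by nlinarith
  set s2 := Real.sqrt (a^2 - x^2) with hs2def
  have hs2 : 0 < s2 := Real.sqrt_pos.2 hax
  have hs2sq : s2^2 = a^2 - x^2 := Real.sq_sqrt hax.le
  have hin : HasDerivAt (fun y => a^2 - y^2) (-(2*x)) x := by
    simpa using ((hasDerivAt_pow 2 x).const_sub (a^2))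
  have hsq : HasDerivAt (fun y => Real.sqrt (a^2 - y^2)) (-(2*x) / (2 * s2)) x :=
    hin.sqrt hax.ne'
  have hnum : HasDerivAt (fun y => y * Real.sqrt (a^2 - y^2))
      (1 * s2 + x * (-(2*x) / (2 * s2))) x := (hasDerivAt_id x).mul hsq
  have hden : HasDerivAt (fun y => 1 - y^2) (-(2*x)) x := by
    simpa using ((hasDerivAt_pow 2 x).const_sub 1)
  have h := hnum.div hden h1x.ne'
  refine h.congr_deriv (Eq.symm ?_)
  field_simp
  linear_combination (-(1+x^2)) * hs2sq

lemma cont_aux {a c : ℝ} (ha : 0 < a) (ha1 : a < 1) :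
    ContinuousOn (fun y : ℝ => Real.arcsin (c * y / (a * Real.sqrt (1 - y^2)))) (Icc 0 a) := by
  apply Real.continuous_arcsin.comp_continuousOn
  apply ContinuousOn.div (by fun_prop) (by fun_prop)
  intro y hy
  have h1 : 0 < 1 - y^2 := by
    rcases hy with ⟨h0, h1⟩; nlinarith
  positivity

lemma cont_aux2 {a : ℝ} (ha : 0 < a) (ha1 : a < 1) :
    ContinuousOn (fun y : ℝ => y * Real.sqrt (a^2 - y^2) / (1 - y^2)) (Icc 0 a) := by
  apply ContinuousOn.div (by fun_prop) (by fun_prop)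
  intro y hy
  have h1 : 0 < 1 - y^2 := by rcases hy with ⟨h0, h1⟩; nlinarith
  exact h1.ne'

lemma int_aux {a : ℝ} (ha : 0 < a) (ha1 : a < 1) (f : ℝ → ℝ) (hf : Continuous f) (n : ℕ) :
    IntervalIntegrable (fun x => f x * Real.sqrt (a^2 - x^2) / (1 - x^2)^n)
      MeasureTheory.volume 0 a := by
  apply ContinuousOn.intervalIntegrable
  rw [uIcc_of_le ha.le]
  apply ContinuousOn.div (by fun_prop) (by fun_prop)
  intro y hy
  have h1 : 0 < 1 - y^2 := by rcases hy with ⟨h0, h1⟩; nlinarith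
  positivity

lemma integral_J1 {a c : ℝ} (ha : 0 < a) (ha1 : a < 1) (hc : c = Real.sqrt (1 - a^2)) :
    ∫ x in (0:ℝ)..a, Real.sqrt (a^2 - x^2) / (1 - x^2)^2 = Real.pi * a^2 / (4*c) := by
  have hc0 : 0 < c := hc ▸ Real.sqrt_pos.2 (by nlinarith)
  set F : ℝ → ℝ := fun y =>
    a^2/(2*c) * Real.arcsin (c * y / (a * Real.sqrt (1 - y^2)))
      + y * Real.sqrt (a^2 - y^2) / (1 - y^2) / 2 with hF
  have key : ∫ x in (0:ℝ)..a, Real.sqrt (a^2 - x^2) / (1 - x^2)^2 = F a - F 0 := by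
    apply intervalIntegral.integral_eq_sub_of_hasDeriv_right_of_le ha.le
    · exact ((cont_aux ha ha1).const_smul (a^2/(2*c))).add ((cont_aux2 ha ha1).div_const 2)
    · intro x hx
      obtain ⟨hx0, hxa⟩ := hx
      have hx1 : x < 1 := hxa.trans ha1
      have h1x : 0 < 1 - x^2 := by nlinarith
      have hax : 0 < a^2 - x^2 := by nlinarith
      set s2 := Real.sqrt (a^2 - x^2) with hs2def
      have hs2 : 0 < s2 := Real.sqrt_pos.2 hax
      have hs2sq : s2^2 = a^2 - x^2 := Real.sq_sqrt hax.le
      have hder := (((hd2 ha ha1 hc hx0.le hxa).const_mul (a^2/(2*c))).add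
        ((hd3 ha ha1 hx0.le hxa).div_const 2))
      have heq : a^2/(2*c) * (c / (s2 * (1 - x^2)))
          + (a^2 + (a^2 - 2) * x^2) / (s2 * (1 - x^2)^2) / 2 = s2 / (1 - x^2)^2 := by
        field_simp
        linear_combination (-2) * hs2sq
      exact (heq ▸ hder).hasDerivWithinAt
    · simpa using int_aux ha ha1 (fun _ => (1:ℝ)) continuous_const 2
  rw [key, hF]
  have h0 : (0:ℝ) * Real.sqrt (a^2 - 0^2) / (1 - 0^2) / 2 = 0 := by simp
  have hca : c * a / (a * Real.sqrt (1 - a^2)) = 1 := by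
    rw [← hc]; field_simp
  simp only []
  rw [hca]
  simp [Real.arcsin_one, Real.sqrt_eq_zero', hc0.ne']
  ring

lemma integral_K {a c : ℝ} (ha : 0 < a) (ha1 : a < 1) (hc : c = Real.sqrt (1 - a^2)) :
    ∫ x in (0:ℝ)..a, Real.sqrt (a^2 - x^2) / (1 - x^2) = Real.pi / 2 * (1 - c) := by
  have hc0 : 0 < c := hc ▸ Real.sqrt_pos.2 (by nlinarith)
  have hc2 : c^2 = 1 - a^2 := by rw [hc]; exact Real.sq_sqrt (by nlinarith)
  set F : ℝ → ℝ := fun y =>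
    Real.arcsin (y / a) - c * Real.arcsin (c * y / (a * Real.sqrt (1 - y^2))) with hF
  have key : ∫ x in (0:ℝ)..a, Real.sqrt (a^2 - x^2) / (1 - x^2) = F a - F 0 := by
    apply intervalIntegral.integral_eq_sub_of_hasDeriv_right_of_le ha.le
    · exact ((Real.continuous_arcsin.comp (by fun_prop)).continuousOn).sub
        ((cont_aux ha ha1).const_smul c)
    · intro x hx
      obtain ⟨hx0, hxa⟩ := hx
      have hx1 : x < 1 := hxa.trans ha1
      have h1x : 0 < 1 - x^2 := by nlinarith
      have hax : 0 < a^2 - x^2 := by nlinarith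
      set s2 := Real.sqrt (a^2 - x^2) with hs2def
      have hs2 : 0 < s2 := Real.sqrt_pos.2 hax
      have hs2sq : s2^2 = a^2 - x^2 := Real.sq_sqrt hax.le
      have hder := (hd1 ha hx0.le hxa).sub ((hd2 ha ha1 hc hx0.le hxa).const_mul c)
      have heq : 1 / s2 - c * (c / (s2 * (1 - x^2))) = s2 / (1 - x^2) := by
        field_simp
        linear_combination (-1) * hc2 + (-1) * hs2sq
      exact (heq ▸ hder).hasDerivWithinAt
    · simpa using int_aux ha ha1 (fun _ => (1:ℝ)) continuous_const 1
  rw [key, hF]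
  have hca : c * a / (a * Real.sqrt (1 - a^2)) = 1 := by
    rw [← hc]; field_simp
  simp only []
  rw [hca, div_self ha.ne']
  simp [Real.arcsin_one]
  ring

lemma integral_J2 {a c : ℝ} (ha : 0 < a) (ha1 : a < 1) (hc : c = Real.sqrt (1 - a^2)) :
    ∫ x in (0:ℝ)..a, x^2 * Real.sqrt (a^2 - x^2) / (1 - x^2)^2
      = Real.pi * a^2 / (4*c) - Real.pi / 2 * (1 - c) := by
  have h1 : ∫ x in (0:ℝ)..a, x^2 * Real.sqrt (a^2 - x^2) / (1 - x^2)^2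
      = ∫ x in (0:ℝ)..a, (Real.sqrt (a^2 - x^2) / (1 - x^2)^2
          - Real.sqrt (a^2 - x^2) / (1 - x^2)) := by
    apply intervalIntegral.integral_congr
    intro x hx
    rw [uIcc_of_le ha.le] at hx
    have h1x : 0 < 1 - x^2 := by rcases hx with ⟨h0, h1⟩; nlinarith
    field_simp
    ring
  rw [h1, intervalIntegral.integral_sub
      (by simpa using int_aux ha ha1 (fun _ => (1:ℝ)) continuous_const 2)
      (by simpa using int_aux ha ha1 (fun _ => (1:ℝ)) continuous_const 1),
    integral_J1 ha ha1 hc, integral_K ha ha1 hc]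

theorem quarterCircle_frobenius_norms (μ α : ℝ) (hμ0 : 0 < μ) (hμ1 : μ < 1)
    (hα : α = (1 + μ) / Real.sqrt μ) :
    (∫ σ in (0 : ℝ)..(2 / α),
        (α / Real.pi) * Real.sqrt (4 - α ^ 2 * σ ^ 2) * (1 / (1 - σ ^ 2)) ^ 2) =
      (1 + μ) / (1 - μ) ∧
    (∫ σ in (0 : ℝ)..(2 / α),
        (α / Real.pi) * Real.sqrt (4 - α ^ 2 * σ ^ 2) * (σ / (1 - σ ^ 2)) ^ 2) =
      μ * (1 + μ) / (1 - μ) := by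
  have hsμ : 0 < Real.sqrt μ := Real.sqrt_pos.2 hμ0
  have hsμ2 : Real.sqrt μ ^ 2 = μ := Real.sq_sqrt hμ0.le
  have hsμ1 : Real.sqrt μ < 1 := by
    rw [show (1:ℝ) = Real.sqrt 1 by simp]
    exact Real.sqrt_lt_sqrt hμ0.le hμ1
  have hα0 : 0 < α := by rw [hα]; positivity
  have hα2 : 2 < α := by
    rw [hα, lt_div_iff₀ hsμ]
    nlinarith
  have hαsq : α^2 = (1+μ)^2/μ := by
    rw [hα, div_pow, hsμ2]
  set a := 2/α with hadef
  have ha : 0 < a := by positivity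
  have ha1 : a < 1 := by
    rw [hadef, div_lt_one hα0]; linarith
  have haa : α^2 * a^2 = 4 := by
    rw [hadef]; field_simp; norm_num
  set c := (1-μ)/(1+μ) with hcdef
  have hc0 : 0 < c := by
    apply div_pos <;> linarith
  have hc : c = Real.sqrt (1 - a^2) := by
    have h1 : 1 - a^2 = c^2 := by
      have ha2 : a^2 = 4*μ/(1+μ)^2 := by
        have : a^2 = 4/α^2 := by rw [hadef]; field_simp; norm_num
        rw [this, hαsq]
        field_simp
      rw [ha2, hcdef]
      field_simp
      ring
    rw [h1, Real.sqrt_sq hc0.le]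
  have hπ : (0:ℝ) < Real.pi := Real.pi_pos
  -- rewrite the integrands
  have hsqrt : ∀ σ : ℝ, Real.sqrt (4 - α^2*σ^2) = α * Real.sqrt (a^2 - σ^2) := by
    intro σ
    have h4 : 4 - α^2*σ^2 = α^2 * (a^2 - σ^2) := by rw [mul_sub, haa]
    rw [h4, Real.sqrt_mul (sq_nonneg α), Real.sqrt_sq hα0.le]
  constructor
  · have h1 : (∫ σ in (0 : ℝ)..(2 / α),
        (α / Real.pi) * Real.sqrt (4 - α ^ 2 * σ ^ 2) * (1 / (1 - σ ^ 2)) ^ 2)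
        = ∫ σ in (0 : ℝ)..a, (α^2 / Real.pi) * (Real.sqrt (a^2 - σ^2) / (1 - σ^2)^2) := by
      apply intervalIntegral.integral_congr
      intro σ _
      simp only [hsqrt]
      field_simp
    rw [h1, intervalIntegral.integral_const_mul, integral_J1 ha ha1 hc]
    rw [hcdef]
    have h1μ : (1:ℝ) - μ ≠ 0 := by linarith
    have h1μ' : (1:ℝ) + μ ≠ 0 := by linarith
    field_simp
    linear_combination haa
  · have h1 : (∫ σ in (0 : ℝ)..(2 / α),
        (α / Real.pi) * Real.sqrt (4 - α ^ 2 * σ ^ 2) * (σ / (1 - σ ^ 2)) ^ 2)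
        = ∫ σ in (0 : ℝ)..a, (α^2 / Real.pi) * (σ^2 * Real.sqrt (a^2 - σ^2) / (1 - σ^2)^2) := by
      apply intervalIntegral.integral_congr
      intro σ _
      simp only [hsqrt]
      field_simp
    rw [h1, intervalIntegral.integral_const_mul, integral_J2 ha ha1 hc]
    rw [hcdef]
    have h1μ : (1:ℝ) - μ ≠ 0 := by linarith
    have h1μ' : (1:ℝ) + μ ≠ 0 := by linarith
    have ha2 : a^2 = 4*μ/(1+μ)^2 := by
      have : a^2 = 4/α^2 := by rw [hadef]; field_simp; norm_num
      rw [this, hαsq]; field_simp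
    rw [ha2, hαsq]
    field_simp
    ring
end
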